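/- Suppose given quasi-categories and maps f : B → A, g : C → A, f̄ : B̄ → Ā, ḡ : C̄ → Ā together with trivial fibrations r : B → B̄, q : A → Ā, s : C → C̄ satisfying q∘f = f̄∘r and q∘g = ḡ∘s. Then the induced map f↓g → f̄↓ḡ between the comma quasi-categories is a trivial fibration. -/

import Mathlib

open CategoryTheory Simplicial Opposite MonoidalCategory CartesianMonoidalCategory

universe v₁ v₂ v₃ u₁ u₂ u₃

noncomputable section
namespace QCat

/-! ## The internal hom of simplicial sets -/

/-- The internal hom of simplicial sets: an `n`-simplex of `sHom X A` is a map
`X ⊗ Δ[n] ⟶ A`. -/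
def sHom (X A : SSet.{0}) : SSet.{0} where
  obj m := (X ⊗ SSet.stdSimplex.obj m.unop) ⟶ A
  map φ := TypeCat.ofHom fun g => (X ◁ SSet.stdSimplex.map φ.unop) ≫ g
  map_id m := by apply ConcreteCategory.hom_ext; intro g; erw [CategoryTheory.Functor.map_id]; simp
  map_comp φ ψ := by apply ConcreteCategory.hom_ext; intro g; erw [CategoryTheory.Functor.map_comp]; simp [MonoidalCategory.whiskerLeft_comp]

/-- constant map of simplicial sets to a standard simplex, at vertex `k` -/
def cnst (Y : SSet.{0}) {n : ℕ} (k : Fin (n+1)) : Y ⟶ Δ[n] where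
  app m := TypeCat.ofHom fun _ => SSet.stdSimplex.const n k m
  naturality _ _ _ := by
    apply ConcreteCategory.hom_ext; intro y
    apply (SSet.stdSimplex.objEquiv).injective
    apply SimplexCategory.Hom.ext
    ext x
    rfl

@[simp] lemma comp_cnst {X Y : SSet.{0}} (h : X ⟶ Y) {n : ℕ} (k : Fin (n+1)) :
    h ≫ cnst Y k = cnst X k := rfl

/-- inclusion of `Y` into the cylinder `Y ⊗ Δ[1]` at vertex `i`. -/
def pt (i : Fin 2) (Y : SSet.{0}) : Y ⟶ Y ⊗ Δ[1] :=
  CartesianMonoidalCategory.lift (𝟙 Y) (cnst Y i)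

lemma pt_natural (i : Fin 2) {X Y : SSet.{0}} (h : X ⟶ Y) :
    h ≫ pt i Y = pt i X ≫ (h ▷ Δ[1]) := by
  apply CartesianMonoidalCategory.hom_ext <;> simp [pt]

/-! ## The homotopy category of a simplicial set -/

lemma δ₁σ₀ (X : SSet.{0}) (x : X _⦋0⦌) : X.δ 1 (X.σ 0 x) = x := by
  change (X.σ 0 ≫ X.δ 1) x = x
  rw [SimplicialObject.δ_comp_σ_succ' (X := X) (j := 1) (i := 0) (by decide)]
  rfl

lemma δ₀σ₀ (X : SSet.{0}) (x : X _⦋0⦌) : X.δ 0 (X.σ 0 x) = x := by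
  change (X.σ 0 ≫ X.δ 0) x = x
  rw [SimplicialObject.δ_comp_σ_self' (X := X) (j := 0) (i := 0) (by decide)]
  rfl

lemma app_δ {X Y : SSet.{0}} (u : X ⟶ Y) {n : ℕ} (i : Fin (n+2)) (e : X _⦋n+1⦌) :
    u.app (op ⦋n⦌) (X.δ i e) = Y.δ i (u.app (op ⦋n+1⦌) e) :=
  ConcreteCategory.congr_hom (SimplicialObject.δ_naturality u i) e

lemma app_σ {X Y : SSet.{0}} (u : X ⟶ Y) {n : ℕ} (i : Fin (n+1)) (e : X _⦋n⦌) :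
    u.app (op ⦋n+1⦌) (X.σ i e) = Y.σ i (u.app (op ⦋n⦌) e) :=
  ConcreteCategory.congr_hom (SimplicialObject.σ_naturality u i) e

instance hoQuiver (X : SSet.{0}) : Quiver (X _⦋0⦌) :=
  ⟨fun x y => {e : X _⦋1⦌ // X.δ 1 e = x ∧ X.δ 0 e = y}⟩

/-- The degenerate edge at a vertex, as an arrow of the edge quiver. -/
def degEdge {X : SSet.{0}} (x : X _⦋0⦌) : x ⟶ x :=
  ⟨X.σ 0 x, δ₁σ₀ X x, δ₀σ₀ X x⟩

/-- The relation on the free category on the graph of vertices and edges of a simplicial set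
which is generated by the degenerate edges (which are related to identities) and the
2-simplices (which witness composition relations). -/
inductive HoRel (X : SSet.{0}) :
    ∀ (a b : Paths (X _⦋0⦌)), (a ⟶ b) → (a ⟶ b) → Prop
  /-- degenerate edges are related to identities -/
  | id (x : X _⦋0⦌) :
      HoRel X ((Paths.of _).obj x) ((Paths.of _).obj x)
        (Quiver.Hom.toPath (degEdge x)) (𝟙 ((Paths.of _).obj x))
  /-- 2-simplices witness composition relations -/
  | comp (σ : X _⦋2⦌) (a m b : X _⦋0⦌)
      (h2s : X.δ 1 (X.δ 2 σ) = a) (h2t : X.δ 0 (X.δ 2 σ) = m)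
      (h0s : X.δ 1 (X.δ 0 σ) = m) (h0t : X.δ 0 (X.δ 0 σ) = b)
      (h1s : X.δ 1 (X.δ 1 σ) = a) (h1t : X.δ 0 (X.δ 1 σ) = b) :
      HoRel X ((Paths.of _).obj a) ((Paths.of _).obj b)
        (Quiver.Hom.toPath (⟨X.δ 2 σ, h2s, h2t⟩ : a ⟶ m) ≫
          Quiver.Hom.toPath (⟨X.δ 0 σ, h0s, h0t⟩ : m ⟶ b))
        (Quiver.Hom.toPath ⟨X.δ 1 σ, h1s, h1t⟩)

/-- The homotopy category of a simplicial set: the free category on its vertices and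
edges, quotiented by the relations generated by degenerate edges and 2-simplices.
This realises the value at `X` of the left adjoint `h` of the nerve functor. -/
def Ho (X : SSet.{0}) : Type := CategoryTheory.Quotient (HoRel X)

instance (X : SSet.{0}) : Category.{0} (CategoryTheory.Quotient (HoRel X)) :=
  CategoryTheory.Quotient.category (HoRel X)

instance (X : SSet.{0}) : Category.{0} (Ho X) :=
  inferInstanceAs (Category (CategoryTheory.Quotient (HoRel X)))

/-- The object of `Ho X` corresponding to a vertex of `X`. -/
def toHo {X : SSet.{0}} (x : X _⦋0⦌) : Ho X := ⟨(Paths.of _).obj x⟩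

/-- The morphism of `Ho X` represented by an edge of `X`, with specified endpoints. -/
def homOfEdge {X : SSet.{0}} (e : X _⦋1⦌) (x y : X _⦋0⦌)
    (hx : X.δ 1 e = x) (hy : X.δ 0 e = y) : toHo x ⟶ toHo y :=
  (Quotient.functor (HoRel X)).map (Quiver.Hom.toPath ⟨e, hx, hy⟩)

lemma homOfEdge_comp {X : SSet.{0}} (σ : X _⦋2⦌) (a m b : X _⦋0⦌)
    (h2s : X.δ 1 (X.δ 2 σ) = a) (h2t : X.δ 0 (X.δ 2 σ) = m)
    (h0s : X.δ 1 (X.δ 0 σ) = m) (h0t : X.δ 0 (X.δ 0 σ) = b)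
    (h1s : X.δ 1 (X.δ 1 σ) = a) (h1t : X.δ 0 (X.δ 1 σ) = b) :
    homOfEdge (X.δ 2 σ) a m h2s h2t ≫ homOfEdge (X.δ 0 σ) m b h0s h0t =
      homOfEdge (X.δ 1 σ) a b h1s h1t := by
  rw [homOfEdge, homOfEdge, homOfEdge]
  erw [← Functor.map_comp]
  exact CategoryTheory.Quotient.sound _ (HoRel.comp σ a m b h2s h2t h0s h0t h1s h1t)

lemma homOfEdge_deg {X : SSet.{0}} (x : X _⦋0⦌) :
    homOfEdge (X.σ 0 x) x x (δ₁σ₀ X x) (δ₀σ₀ X x) = 𝟙 (toHo x) := by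
  have h := CategoryTheory.Quotient.sound (HoRel X) (HoRel.id x)
  rw [homOfEdge]
  exact h.trans (CategoryTheory.Functor.map_id _ _)

/-- An edge of a simplicial set is an *isomorphism* if it becomes invertible
in the homotopy category. -/
def IsIsoEdge (X : SSet.{0}) (e : X _⦋1⦌) : Prop :=
  IsIso (homOfEdge e (X.δ 1 e) (X.δ 0 e) rfl rfl)

end QCat

namespace QCat
open CategoryTheory Simplicial Opposite MonoidalCategory CartesianMonoidalCategory

/-! ## Functoriality of the homotopy category -/

/-- The prefunctor on vertices and edges induced by a simplicial map. -/
def edgePre {X Y : SSet.{0}} (u : X ⟶ Y) : Prefunctor (X _⦋0⦌) (Y _⦋0⦌) where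
  obj x := u.app (op ⦋0⦌) x
  map {x y} e := ⟨u.app (op ⦋1⦌) e.1, by rw [← app_δ, e.2.1], by rw [← app_δ, e.2.2]⟩

/-- The functor on homotopy categories induced by a simplicial map. -/
def hoMap {X Y : SSet.{0}} (u : X ⟶ Y) : Ho X ⥤ Ho Y := by
  refine CategoryTheory.Quotient.lift (HoRel X)
    (Paths.lift ((edgePre u).comp
      (Prefunctor.comp (Paths.of _) (Quotient.functor (HoRel Y)).toPrefunctor))) ?_
  intro a b p q h
  induction h with
  | id x =>
    erw [Paths.lift_toPath, CategoryTheory.Functor.map_id]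
    have : (edgePre u).map (degEdge x) = degEdge (u.app (op ⦋0⦌) x) :=
      Subtype.ext (app_σ u 0 x)
    dsimp [Prefunctor.comp]
    erw [this]
    have h := CategoryTheory.Quotient.sound (HoRel Y) (HoRel.id (u.app (op ⦋0⦌) x))
    exact h.trans (CategoryTheory.Functor.map_id _ _)
  | comp σ a m b h2s h2t h0s h0t h1s h1t =>
    erw [Paths.lift_toPath, Functor.map_comp, Paths.lift_toPath, Paths.lift_toPath]
    dsimp [Prefunctor.comp]
    have e2 : (edgePre u).map (⟨X.δ 2 σ, h2s, h2t⟩ : a ⟶ m) =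
        ⟨Y.δ 2 (u.app (op ⦋2⦌) σ), by rw [← app_δ, ← app_δ, h2s]; rfl, by rw [← app_δ, ← app_δ, h2t]; rfl⟩ :=
      Subtype.ext (app_δ u 2 σ)
    have e0 : (edgePre u).map (⟨X.δ 0 σ, h0s, h0t⟩ : m ⟶ b) =
        ⟨Y.δ 0 (u.app (op ⦋2⦌) σ), by rw [← app_δ, ← app_δ, h0s]; rfl, by rw [← app_δ, ← app_δ, h0t]; rfl⟩ :=
      Subtype.ext (app_δ u 0 σ)
    have e1 : (edgePre u).map (⟨X.δ 1 σ, h1s, h1t⟩ : a ⟶ b) =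
        ⟨Y.δ 1 (u.app (op ⦋2⦌) σ), by rw [← app_δ, ← app_δ, h1s]; rfl, by rw [← app_δ, ← app_δ, h1t]; rfl⟩ :=
      Subtype.ext (app_δ u 1 σ)
    erw [e2, e0, e1]
    refine ((Quotient.functor (HoRel Y)).map_comp _ _).symm.trans ?_
    exact CategoryTheory.Quotient.sound _
      (HoRel.comp (u.app (op ⦋2⦌) σ) (u.app (op ⦋0⦌) a) (u.app (op ⦋0⦌) m) (u.app (op ⦋0⦌) b)
        (by rw [← app_δ, ← app_δ, h2s]) (by rw [← app_δ, ← app_δ, h2t])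
        (by rw [← app_δ, ← app_δ, h0s]) (by rw [← app_δ, ← app_δ, h0t])
        (by rw [← app_δ, ← app_δ, h1s]) (by rw [← app_δ, ← app_δ, h1t]))

@[simp] lemma hoMap_obj_toHo {X Y : SSet.{0}} (u : X ⟶ Y) (x : X _⦋0⦌) :
    (hoMap u).obj (toHo x) = toHo (u.app (op ⦋0⦌) x) := rfl

lemma hoMap_homOfEdge {X Y : SSet.{0}} (u : X ⟶ Y) (e : X _⦋1⦌) (x y : X _⦋0⦌)
    (hx : X.δ 1 e = x) (hy : X.δ 0 e = y) :
    (hoMap u).map (homOfEdge e x y hx hy) =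
      homOfEdge (u.app (op ⦋1⦌) e) (u.app (op ⦋0⦌) x) (u.app (op ⦋0⦌) y)
        (by rw [← hx, app_δ]) (by rw [← hy, app_δ]) := by
  dsimp only [hoMap, homOfEdge]
  erw [CategoryTheory.Quotient.lift_map_functor_map, Paths.lift_toPath]

end QCat

namespace QCat
open CategoryTheory Simplicial Opposite MonoidalCategory CartesianMonoidalCategory

/-! ## Smothering functors -/

/-- A functor is *smothering* if it is surjective on objects, full, and conservative. -/
structure IsSmothering {C D : Type*} [Category C] [Category D] (F : C ⥤ D) : Prop where
  obj_surj : ∀ d : D, ∃ c : C, F.obj c = d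
  full : ∀ {c c' : C} (g : F.obj c ⟶ F.obj c'), ∃ f : c ⟶ c', F.map f = g
  conservative : ∀ {c c' : C} (f : c ⟶ c'), IsIso (F.map f) → IsIso f

/-! ## Fibrations of simplicial sets -/

/-- A map of simplicial sets is an inner fibration if it has the right lifting property
with respect to all inner horn inclusions. -/
def IsInnerFibration {E B : SSet.{0}} (p : E ⟶ B) : Prop :=
  ∀ ⦃n : ℕ⦄ ⦃i : Fin (n+1)⦄, 0 < i → i < Fin.last n →
    HasLiftingProperty ((Λ[n, i]).ι) p

/-- The free-standing isomorphism: the groupoid with two objects and exactly one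
morphism in each hom-set. -/
def WIso : Type := Bool

instance : Groupoid WIso where
  Hom _ _ := PUnit
  id _ := PUnit.unit
  comp _ _ := PUnit.unit
  inv _ := PUnit.unit

/-- One of the two endpoint inclusions `Δ[0] ⟶ N(I)` into the nerve of the free-standing
isomorphism. -/
def ptWIso : Δ[0] ⟶ nerve WIso :=
  (SSet.yonedaEquiv (X := (nerve WIso)) (n := ⦋0⦌)).symm (ComposableArrows.mk₀ (false : WIso))

/-- An *isofibration* is a map (between quasi-categories) having the right lifting property
with respect to the inner horn inclusions and the endpoint inclusion `Δ[0] ⟶ N(I)`. -/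
def IsIsofibration {E B : SSet.{0}} (p : E ⟶ B) : Prop :=
  IsInnerFibration p ∧ HasLiftingProperty ptWIso p

/-- A *trivial fibration* is a map having the right lifting property with respect to
all boundary inclusions. -/
def IsTrivialFibration {E B : SSet.{0}} (p : E ⟶ B) : Prop :=
  ∀ n : ℕ, HasLiftingProperty ((∂Δ[n]).ι) p

/-! ## Terminal vertices -/

/-- The final vertex of `∂Δ[n+1]`. -/
def lastVtxBdry (n : ℕ) : (∂Δ[n+1] : SSet.{0}) _⦋0⦌ :=
  ⟨SSet.stdSimplex.const (n+1) (Fin.last (n+1)) (op ⦋0⦌), by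
    intro h
    obtain ⟨x, hx⟩ := h 0
    have := congrArg Fin.val hx
    simp [SSet.stdSimplex.asOrderHom, Fin.last] at this⟩

/-- A vertex `t` of a simplicial set `A` is *terminal in Joyal's sense* if every sphere
`∂Δ[n] ⟶ A` (`n ≥ 1`) whose final vertex is `t` can be filled to a simplex `Δ[n] ⟶ A`. -/
def IsTerminalVtx (A : SSet.{0}) (t : A _⦋0⦌) : Prop :=
  ∀ (n : ℕ) (s : (∂Δ[n+1] : SSet.{0}) ⟶ A), s.app (op ⦋0⦌) (lastVtxBdry n) = t →
    ∃ g : Δ[n+1] ⟶ A, (∂Δ[n+1]).ι ≫ g = s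

end QCat

namespace QCat
open CategoryTheory Simplicial Opposite MonoidalCategory CartesianMonoidalCategory

/-! ## Yoneda lemmas -/

lemma yE_symm_naturality {B : SSet.{0}} {m m' : SimplexCategoryᵒᵖ} (φ : m ⟶ m') (x : B.obj m) :
    (SSet.yonedaEquiv (X := B) (n := m'.unop)).symm (B.map φ x) =
      SSet.stdSimplex.map φ.unop ≫ (SSet.yonedaEquiv (X := B) (n := m.unop)).symm x := by
  ext k g
  change B.map (g.down).op (B.map φ x) = B.map (g.down ≫ φ.unop).op x
  rw [← FunctorToTypes.map_comp_apply]
  rfl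

lemma yE_symm_comp {B B' : SSet.{0}} (r : B ⟶ B') {m : SimplexCategoryᵒᵖ} (x : B.obj m) :
    (SSet.yonedaEquiv (X := B') (n := m.unop)).symm (r.app m x) =
      (SSet.yonedaEquiv (X := B) (n := m.unop)).symm x ≫ r := by
  ext k g
  exact (NatTrans.naturality_apply r (g.down).op x).symm

end QCat

namespace QCat
open CategoryTheory Simplicial Opposite MonoidalCategory CartesianMonoidalCategory

/-! ## Comma simplicial sets -/

/-- The comma simplicial set `f↓g` of a cospan `f : B ⟶ A`, `g : C ⟶ A`: an `n`-simplex
is a triple `(c, b, α)` where `c` is an `n`-simplex of `C`, `b` is an `n`-simplex of `B`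
and `α : Δ[n] ⊗ Δ[1] ⟶ A` restricts at vertex `0` of `Δ[1]` to `f ∘ b` and at vertex `1`
to `g ∘ c`.  This is a concrete model of the pullback of
`A^{Δ[1]} → A × A` along `g × f : C × B → A × A`. -/
def comma {A B C : SSet.{0}} (f : B ⟶ A) (g : C ⟶ A) : SSet.{0} where
  obj m := {p : (C.obj m × B.obj m) × ((SSet.stdSimplex.obj m.unop ⊗ Δ[1] : SSet.{0}) ⟶ A) //
      pt 0 (SSet.stdSimplex.obj m.unop) ≫ p.2 = (SSet.yonedaEquiv (X := B) (n := m.unop)).symm p.1.2 ≫ f ∧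
      pt 1 (SSet.stdSimplex.obj m.unop) ≫ p.2 = (SSet.yonedaEquiv (X := C) (n := m.unop)).symm p.1.1 ≫ g}
  map φ := TypeCat.ofHom fun p => ⟨((C.map φ p.1.1.1, B.map φ p.1.1.2),
      (SSet.stdSimplex.map φ.unop ▷ Δ[1]) ≫ p.1.2), by
        rw [← Category.assoc, ← pt_natural, Category.assoc, p.2.1,
          yE_symm_naturality, Category.assoc], by
        rw [← Category.assoc, ← pt_natural, Category.assoc, p.2.2,
          yE_symm_naturality, Category.assoc]⟩
  map_id m := by
    apply ConcreteCategory.hom_ext; intro p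
    apply Subtype.ext
    refine Prod.ext (Prod.ext ?_ ?_) ?_ <;> simp
    erw [CategoryTheory.Functor.map_id]; simp
  map_comp φ ψ := by
    apply ConcreteCategory.hom_ext; intro p
    apply Subtype.ext
    refine Prod.ext (Prod.ext ?_ ?_) ?_ <;>
      simp [MonoidalCategory.comp_whiskerRight]
    erw [CategoryTheory.Functor.map_comp]; simp [MonoidalCategory.comp_whiskerRight]

/-- The projection `f↓g ⟶ B` (evaluation at the domain). -/
def commaP₀ {A B C : SSet.{0}} (f : B ⟶ A) (g : C ⟶ A) : comma f g ⟶ B where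
  app m := TypeCat.ofHom fun p => p.1.1.2
  naturality _ _ _ := rfl

/-- The projection `f↓g ⟶ C` (evaluation at the codomain). -/
def commaP₁ {A B C : SSet.{0}} (f : B ⟶ A) (g : C ⟶ A) : comma f g ⟶ C where
  app m := TypeCat.ofHom fun p => p.1.1.1
  naturality _ _ _ := rfl

/-- The map between comma simplicial sets induced by a map of cospans. -/
def commaMap {A B C A' B' C' : SSet.{0}} {f : B ⟶ A} {g : C ⟶ A}
    {f' : B' ⟶ A'} {g' : C' ⟶ A'} (q : A ⟶ A') (r : B ⟶ B') (s : C ⟶ C')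
    (hf : f ≫ q = r ≫ f') (hg : g ≫ q = s ≫ g') :
    comma f g ⟶ comma f' g' where
  app m := TypeCat.ofHom fun p => ⟨((s.app m p.1.1.1, r.app m p.1.1.2), p.1.2 ≫ q), by
      rw [← Category.assoc, p.2.1, Category.assoc, hf, yE_symm_comp, Category.assoc], by
      rw [← Category.assoc, p.2.2, Category.assoc, hg, yE_symm_comp, Category.assoc]⟩
  naturality φ ψ := by
    intro ρ
    apply ConcreteCategory.hom_ext; intro p
    apply Subtype.ext
    refine Prod.ext (Prod.ext ?_ ?_) ?_
    · exact NatTrans.naturality_apply s _ _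
    · exact NatTrans.naturality_apply r _ _
    · exact Category.assoc _ _ _

end QCat

namespace QCat
open CategoryTheory Simplicial Opposite MonoidalCategory CartesianMonoidalCategory

/-! ## Adjunctions of quasi-categories -/

/-- An adjunction of quasi-categories `f ⊣ u` between quasi-categories `A` and `B`:
maps `f : B ⟶ A` and `u : A ⟶ B`, a unit `η` (a 1-simplex of `B^B` from the identity
to `u ∘ f`), a counit `ε` (a 1-simplex of `A^A` from `f ∘ u` to the identity), and
2-simplices `α` of `B^A` and `β` of `A^B` witnessing the two triangle identities. -/
structure QAdj (A B : SSet.{0}) (f : B ⟶ A) (u : A ⟶ B) : Type where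
  /-- the unit, a `1`-simplex of `B^B` -/
  η : (B ⊗ Δ[1] : SSet.{0}) ⟶ B
  /-- the counit, a `1`-simplex of `A^A` -/
  ε : (A ⊗ Δ[1] : SSet.{0}) ⟶ A
  η₀ : pt 0 B ≫ η = 𝟙 B
  η₁ : pt 1 B ≫ η = f ≫ u
  ε₀ : pt 0 A ≫ ε = u ≫ f
  ε₁ : pt 1 A ≫ ε = 𝟙 A
  /-- a `2`-simplex of `B^A` witnessing the triangle identity for `u` -/
  α : (A ⊗ Δ[2] : SSet.{0}) ⟶ B
  /-- a `2`-simplex of `A^B` witnessing the triangle identity for `f` -/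
  β : (B ⊗ Δ[2] : SSet.{0}) ⟶ A
  α₂ : (A ◁ SSet.stdSimplex.map (SimplexCategory.δ 2)) ≫ α = (u ▷ Δ[1]) ≫ η
  α₀ : (A ◁ SSet.stdSimplex.map (SimplexCategory.δ 0)) ≫ α = ε ≫ u
  α₁ : (A ◁ SSet.stdSimplex.map (SimplexCategory.δ 1)) ≫ α = fst A Δ[1] ≫ u
  β₂ : (B ◁ SSet.stdSimplex.map (SimplexCategory.δ 2)) ≫ β = η ≫ f
  β₀ : (B ◁ SSet.stdSimplex.map (SimplexCategory.δ 0)) ≫ β = (f ▷ Δ[1]) ≫ ε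
  β₁ : (B ◁ SSet.stdSimplex.map (SimplexCategory.δ 1)) ≫ β = fst B Δ[1] ≫ f

/-- The map `Δ[0] ⟶ A` corresponding to a vertex of `A`. -/
def vMap {A : SSet.{0}} (a : A _⦋0⦌) : Δ[0] ⟶ A :=
  (SSet.yonedaEquiv (X := A) (n := ⦋0⦌)).symm a

end QCat

namespace QCat
open CategoryTheory Simplicial Opposite MonoidalCategory CartesianMonoidalCategory

/-! ## Strict pullbacks of categories, and pullbacks of simplicial sets -/

/-- The strict pullback of two functors, formed in `Cat`. -/
structure CatPB {A : Type u₁} {B : Type u₂} {C : Type u₃}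
    [Category.{v₁} A] [Category.{v₂} B] [Category.{v₃} C]
    (F : B ⥤ A) (G : C ⥤ A) : Type (max u₂ u₃) where
  b : B
  c : C
  w : F.obj b = G.obj c

instance CatPB.category {A : Type u₁} {B : Type u₂} {C : Type u₃}
    [Category.{v₁} A] [Category.{v₂} B] [Category.{v₃} C]
    (F : B ⥤ A) (G : C ⥤ A) : Category.{max v₂ v₃} (CatPB F G) where
  Hom p q := {φ : (p.b ⟶ q.b) × (p.c ⟶ q.c) //
    F.map φ.1 = eqToHom p.w ≫ G.map φ.2 ≫ eqToHom q.w.symm}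
  id p := ⟨(𝟙 p.b, 𝟙 p.c), by
    rw [CategoryTheory.Functor.map_id, CategoryTheory.Functor.map_id]
    simp⟩
  comp φ ψ := ⟨(φ.1.1 ≫ ψ.1.1, φ.1.2 ≫ ψ.1.2), by
    rw [CategoryTheory.Functor.map_comp, CategoryTheory.Functor.map_comp, φ.2, ψ.2]
    simp⟩
  id_comp φ := by
    apply Subtype.ext
    apply Prod.ext <;> simp
  comp_id φ := by
    apply Subtype.ext
    apply Prod.ext <;> simp
  assoc φ ψ ρ := by
    apply Subtype.ext
    apply Prod.ext <;> simp

/-- The concrete pullback of a cospan of simplicial sets. -/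
def sPullback {A B C : SSet.{0}} (f : B ⟶ A) (g : C ⟶ A) : SSet.{0} where
  obj m := {p : B.obj m × C.obj m // f.app m p.1 = g.app m p.2}
  map φ := TypeCat.ofHom fun p => ⟨(B.map φ p.1.1, C.map φ p.1.2), by
    dsimp only
    rw [NatTrans.naturality_apply f, NatTrans.naturality_apply g, p.2]⟩
  map_id m := by apply ConcreteCategory.hom_ext; intro p; apply Subtype.ext; simp
  map_comp φ ψ := by apply ConcreteCategory.hom_ext; intro p; apply Subtype.ext; simp

end QCat

namespace QCat
open CategoryTheory Simplicial Opposite MonoidalCategory CartesianMonoidalCategory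

/-! ## A universal property for `Ho` -/

/-- Construct a functor out of the homotopy category of a simplicial set from a prefunctor
defined on vertices and edges which sends degenerate edges to identities and composites
witnessed by 2-simplices to composites. -/
def hoLift {X : SSet.{0}} {D : Type*} [Category D] (φ : Prefunctor (X _⦋0⦌) D)
    (hid : ∀ x : X _⦋0⦌, φ.map (degEdge x) = 𝟙 (φ.obj x))
    (hcomp : ∀ (σ : X _⦋2⦌) (a m b : X _⦋0⦌)
      (h2s : X.δ 1 (X.δ 2 σ) = a) (h2t : X.δ 0 (X.δ 2 σ) = m)
      (h0s : X.δ 1 (X.δ 0 σ) = m) (h0t : X.δ 0 (X.δ 0 σ) = b)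
      (h1s : X.δ 1 (X.δ 1 σ) = a) (h1t : X.δ 0 (X.δ 1 σ) = b),
      φ.map (⟨X.δ 2 σ, h2s, h2t⟩ : a ⟶ m) ≫ φ.map (⟨X.δ 0 σ, h0s, h0t⟩ : m ⟶ b) =
        φ.map (⟨X.δ 1 σ, h1s, h1t⟩ : a ⟶ b)) :
    Ho X ⥤ D :=
  CategoryTheory.Quotient.lift _ (Paths.lift φ) (by
    intro a b p q h
    induction h with
    | id x =>
      erw [Paths.lift_toPath, CategoryTheory.Functor.map_id]
      exact hid x
    | comp σ a m b h2s h2t h0s h0t h1s h1t =>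
      erw [CategoryTheory.Functor.map_comp, Paths.lift_toPath, Paths.lift_toPath,
        Paths.lift_toPath]
      exact hcomp σ a m b h2s h2t h0s h0t h1s h1t)

@[simp] lemma hoLift_obj_toHo {X : SSet.{0}} {D : Type*} [Category D]
    (φ : Prefunctor (X _⦋0⦌) D) (hid) (hcomp) (x : X _⦋0⦌) :
    (hoLift φ hid hcomp).obj (toHo x) = φ.obj x := rfl

lemma hoLift_map_homOfEdge {X : SSet.{0}} {D : Type*} [Category D]
    (φ : Prefunctor (X _⦋0⦌) D) (hid) (hcomp) (e : X _⦋1⦌) (x y : X _⦋0⦌)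
    (hx : X.δ 1 e = x) (hy : X.δ 0 e = y) :
    (hoLift φ hid hcomp).map (homOfEdge e x y hx hy) = φ.map ⟨e, hx, hy⟩ := by
  dsimp only [hoLift, homOfEdge]
  erw [CategoryTheory.Quotient.lift_map_functor_map, Paths.lift_toPath]
  rfl

lemma homOfEdge_eq {X : SSet.{0}} {e e' : X _⦋1⦌} (h : e = e') {x y x' y' : X _⦋0⦌}
    (hx : X.δ 1 e = x) (hy : X.δ 0 e = y) (hx' : X.δ 1 e' = x') (hy' : X.δ 0 e' = y')
    (hxx : toHo x = toHo x') (hyy : toHo y = toHo y') :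
    homOfEdge e x y hx hy = eqToHom hxx ≫ homOfEdge e' x' y' hx' hy' ≫ eqToHom hyy.symm := by
  subst h
  subst hx hy hx' hy'
  simp

end QCat

namespace QCat
open CategoryTheory Simplicial Opposite MonoidalCategory CartesianMonoidalCategory

/-! ## The comparison functor for pullbacks -/

/-- The canonical comparison prefunctor from the vertices and edges of `B ×_A C` to the
strict pullback of homotopy categories. -/
def cmpPBPre {A B C : SSet.{0}} (f : B ⟶ A) (g : C ⟶ A) :
    Prefunctor ((sPullback f g) _⦋0⦌) (CatPB (hoMap f) (hoMap g)) where
  obj p := ⟨toHo p.1.1, toHo p.1.2, congrArg toHo p.2⟩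
  map {p q} E :=
    ⟨(homOfEdge E.1.1.1 p.1.1 q.1.1
        (congrArg (fun z => z.1.1) E.2.1) (congrArg (fun z => z.1.1) E.2.2),
      homOfEdge E.1.1.2 p.1.2 q.1.2
        (congrArg (fun z => z.1.2) E.2.1) (congrArg (fun z => z.1.2) E.2.2)), by
      erw [hoMap_homOfEdge, hoMap_homOfEdge]
      exact homOfEdge_eq E.1.2 _ _ _ _ (congrArg toHo p.2) (congrArg toHo q.2)
      all_goals first
        | (exact congrArg (fun z => z.1.1) E.2.1) | (exact congrArg (fun z => z.1.1) E.2.2)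
        | (exact congrArg (fun z => z.1.2) E.2.1) | (exact congrArg (fun z => z.1.2) E.2.2)⟩

/-- The canonical comparison functor `h(B ×_A C) ⥤ hB ×_{hA} hC`. -/
def cmpPB {A B C : SSet.{0}} (f : B ⟶ A) (g : C ⟶ A) :
    Ho (sPullback f g) ⥤ CatPB (hoMap f) (hoMap g) :=
  hoLift (cmpPBPre f g)
    (fun p => by
      apply Subtype.ext
      apply Prod.ext
      · exact homOfEdge_deg p.1.1
      · exact homOfEdge_deg p.1.2)
    (fun σ a m b h2s h2t h0s h0t h1s h1t => by
      apply Subtype.ext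
      apply Prod.ext
      · exact homOfEdge_comp σ.1.1 a.1.1 m.1.1 b.1.1
          (congrArg (fun z => z.1.1) h2s) (congrArg (fun z => z.1.1) h2t)
          (congrArg (fun z => z.1.1) h0s) (congrArg (fun z => z.1.1) h0t)
          (congrArg (fun z => z.1.1) h1s) (congrArg (fun z => z.1.1) h1t)
      · exact homOfEdge_comp σ.1.2 a.1.2 m.1.2 b.1.2
          (congrArg (fun z => z.1.2) h2s) (congrArg (fun z => z.1.2) h2t)
          (congrArg (fun z => z.1.2) h0s) (congrArg (fun z => z.1.2) h0t)
          (congrArg (fun z => z.1.2) h1s) (congrArg (fun z => z.1.2) h1t))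

end QCat

namespace QCat
open CategoryTheory Simplicial Opposite MonoidalCategory CartesianMonoidalCategory

/-! ## Evaluation of simplices of internal homs -/

/-- The edge of `A` obtained by evaluating a `1`-simplex of `A^X` at a vertex of `X`. -/
def evalEdge {X A : SSet.{0}} (k : (X ⊗ Δ[1] : SSet.{0}) ⟶ A) (x : X _⦋0⦌) : A _⦋1⦌ :=
  k.app (op ⦋1⦌) (X.σ 0 x, SSet.yonedaEquiv (𝟙 Δ[1]))

/-- The generic `m`-simplex of the standard simplex `Δ[m]`. -/
def genSimp (m : SimplexCategoryᵒᵖ) : (SSet.stdSimplex.obj m.unop).obj m :=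
  SSet.stdSimplex.objEquiv.symm (𝟙 m.unop)

lemma ptΔ_eq {n : ℕ} (x y : Δ[n] _⦋0⦌) (h : (SSet.stdSimplex.asOrderHom x) 0 = (SSet.stdSimplex.asOrderHom y) 0) :
    x = y := by
  apply (SSet.stdSimplex.objEquiv).injective
  apply SimplexCategory.Hom.ext
  apply OrderHom.ext
  funext i
  fin_cases i
  exact h

lemma map_const {n : ℕ} (k : Fin (n+1)) {m m' : SimplexCategoryᵒᵖ} (φ : m ⟶ m') :
    Δ[n].map φ (SSet.stdSimplex.const n k m) = SSet.stdSimplex.const n k m' := by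
  apply (SSet.stdSimplex.objEquiv).injective
  apply SimplexCategory.Hom.ext
  apply OrderHom.ext
  funext i
  rfl

/-- Evaluation of `A^{Δ[1]}` at a vertex of the exponent `Δ[1]`. -/
def evV {A : SSet.{0}} (i : Fin 2) : sHom Δ[1] A ⟶ A where
  app m := TypeCat.ofHom fun k => k.app m (SSet.stdSimplex.const 1 i m, genSimp m)
  naturality {m m'} φ := by
    apply ConcreteCategory.hom_ext; intro k
    change (k.app m' _ : A.obj m') = A.map φ (k.app m _)
    erw [← NatTrans.naturality_apply k φ]
    congr 1

end QCat

namespace QCat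
open CategoryTheory Simplicial Opposite MonoidalCategory CartesianMonoidalCategory

/-! ## Functors into arrow and comma categories from natural transformations -/

/-- The functor into the arrow category determined by a natural transformation. -/
def toArrowFunctor {C D : Type*} [Category C] [Category D] {F G : C ⥤ D} (ν : F ⟶ G) :
    C ⥤ Arrow D where
  obj c := Arrow.mk (ν.app c)
  map {c c'} φ := Arrow.homMk (u := F.map φ) (v := G.map φ) (ν.naturality φ)
  map_id c := by
    apply CommaMorphism.ext <;> simp
  map_comp φ ψ := by
    apply CommaMorphism.ext <;> simp

/-- The functor into a comma category determined by a natural transformation. -/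
def toCommaFunctor {C D E T : Type*} [Category C] [Category D] [Category E] [Category T]
    {L : D ⥤ T} {R : E ⥤ T} {P : C ⥤ D} {Q : C ⥤ E} (ν : P ⋙ L ⟶ Q ⋙ R) :
    C ⥤ Comma L R where
  obj c := ⟨P.obj c, Q.obj c, ν.app c⟩
  map {c c'} φ := ⟨P.map φ, Q.map φ, ν.naturality φ⟩
  map_id c := by
    apply CommaMorphism.ext <;> simp
  map_comp φ ψ := by
    apply CommaMorphism.ext <;> simp

end QCat

namespace QCat
open CategoryTheory Simplicial Opposite MonoidalCategory CartesianMonoidalCategory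

/-! ## Pre- and post-composition on internal homs -/

/-- Postcomposition map on internal homs. -/
def postW (X : SSet.{0}) {B A : SSet.{0}} (p : B ⟶ A) : sHom X B ⟶ sHom X A where
  app m := TypeCat.ofHom fun g => g ≫ p
  naturality {m m'} φ := by
    apply ConcreteCategory.hom_ext; intro g
    show ((X ◁ SSet.stdSimplex.map φ.unop) ≫ g) ≫ p =
      (X ◁ SSet.stdSimplex.map φ.unop) ≫ (g ≫ p)
    exact Category.assoc _ _ _

/-- Precomposition map on internal homs. -/
def preW {A B : SSet.{0}} (w : A ⟶ B) (C : SSet.{0}) : sHom B C ⟶ sHom A C where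
  app m := TypeCat.ofHom fun g => (w ▷ SSet.stdSimplex.obj m.unop) ≫ g
  naturality {m m'} φ := by
    apply ConcreteCategory.hom_ext; intro g
    show (w ▷ SSet.stdSimplex.obj m'.unop) ≫ ((B ◁ SSet.stdSimplex.map φ.unop) ≫ g) =
      (A ◁ SSet.stdSimplex.map φ.unop) ≫ ((w ▷ SSet.stdSimplex.obj m.unop) ≫ g)
    erw [← Category.assoc]

end QCat

namespace QCat
open CategoryTheory Simplicial Opposite MonoidalCategory CartesianMonoidalCategory

/-! ## Distinguished vertices of comma quasi-categories -/

/-- The vertex of the comma quasi-category `f↓a` determined by the vertex `u(a)` together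
with the `1`-simplex `ε ∘ (a × Δ[1]) : f(u(a)) → a`, the component of the counit at `a`. -/
def counitVtx {A B : SSet.{0}} {f : B ⟶ A} {u : A ⟶ B} (adj : QAdj A B f u) (a : A _⦋0⦌) :
    (comma f (vMap a)) _⦋0⦌ :=
  ⟨((SSet.yonedaEquiv (𝟙 Δ[0]), u.app (op ⦋0⦌) a), (vMap a ▷ Δ[1]) ≫ adj.ε), by
    constructor
    · rw [← Category.assoc, ← pt_natural, Category.assoc, adj.ε₀]
      show _ = (SSet.yonedaEquiv (X := B) (n := ⦋0⦌)).symm (u.app (op ⦋0⦌) a) ≫ f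
      rw [yE_symm_comp u a, Category.assoc]
      rfl
    · rw [← Category.assoc, ← pt_natural, Category.assoc, adj.ε₁, Category.comp_id]
      show vMap a = (SSet.yonedaEquiv (X := Δ[0]) (n := ⦋0⦌)).symm (SSet.yonedaEquiv (𝟙 Δ[0])) ≫ vMap a
      rw [Equiv.symm_apply_apply, Category.id_comp]⟩

/-- The vertex of the comma quasi-category `A↓a` determined by the vertex `a` together
with the degenerate `1`-simplex at `a`. -/
def idVtx {A : SSet.{0}} (a : A _⦋0⦌) : (comma (𝟙 A) (vMap a)) _⦋0⦌ :=
  ⟨((SSet.yonedaEquiv (𝟙 Δ[0]), a), fst Δ[0] Δ[1] ≫ vMap a), by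
    constructor
    · rw [← Category.assoc]
      show (𝟙 _) ≫ vMap a = (SSet.yonedaEquiv (X := A) (n := ⦋0⦌)).symm a ≫ 𝟙 A
      rw [Category.id_comp, Category.comp_id]
      rfl
    · rw [← Category.assoc]
      show (𝟙 _) ≫ vMap a = (SSet.yonedaEquiv (X := Δ[0]) (n := ⦋0⦌)).symm (SSet.yonedaEquiv (𝟙 Δ[0])) ≫ vMap a
      rw [Category.id_comp, Equiv.symm_apply_apply, Category.id_comp]⟩

/-! ## Fibred equivalences between `f↓A` and `B↓u` -/

/-- The data of an equivalence, fibred over `A × B`, between the comma quasi-categories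
`f↓A` and `B↓u`. -/
structure CommaEquivFibred {A B : SSet.{0}} (f : B ⟶ A) (u : A ⟶ B) : Type where
  /-- a map `B↓u ⟶ f↓A` over `A × B` -/
  w : comma (𝟙 B) u ⟶ comma f (𝟙 A)
  /-- a map `f↓A ⟶ B↓u` over `A × B` -/
  w' : comma f (𝟙 A) ⟶ comma (𝟙 B) u
  hw₁ : w ≫ commaP₁ f (𝟙 A) = commaP₁ (𝟙 B) u
  hw₀ : w ≫ commaP₀ f (𝟙 A) = commaP₀ (𝟙 B) u
  hw'₁ : w' ≫ commaP₁ (𝟙 B) u = commaP₁ f (𝟙 A)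
  hw'₀ : w' ≫ commaP₀ (𝟙 B) u = commaP₀ f (𝟙 A)
  /-- a `1`-simplex of `(f↓A)^{f↓A}` whose two vertices are `w ∘ w'` and the identity -/
  H : (comma f (𝟙 A) ⊗ Δ[1] : SSet.{0}) ⟶ comma f (𝟙 A)
  hH : (pt 0 _ ≫ H = w' ≫ w ∧ pt 1 _ ≫ H = 𝟙 _) ∨
       (pt 0 _ ≫ H = 𝟙 _ ∧ pt 1 _ ≫ H = w' ≫ w)
  hHiso : IsIsoEdge (sHom (comma f (𝟙 A)) (comma f (𝟙 A))) H
  hH₁ : H ≫ commaP₁ f (𝟙 A) = fst _ _ ≫ commaP₁ f (𝟙 A)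
  hH₀ : H ≫ commaP₀ f (𝟙 A) = fst _ _ ≫ commaP₀ f (𝟙 A)
  /-- a `1`-simplex of `(B↓u)^{B↓u}` whose two vertices are `w' ∘ w` and the identity -/
  K : (comma (𝟙 B) u ⊗ Δ[1] : SSet.{0}) ⟶ comma (𝟙 B) u
  hK : (pt 0 _ ≫ K = w ≫ w' ∧ pt 1 _ ≫ K = 𝟙 _) ∨
       (pt 0 _ ≫ K = 𝟙 _ ∧ pt 1 _ ≫ K = w ≫ w')
  hKiso : IsIsoEdge (sHom (comma (𝟙 B) u) (comma (𝟙 B) u)) K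
  hK₁ : K ≫ commaP₁ (𝟙 B) u = fst _ _ ≫ commaP₁ (𝟙 B) u
  hK₀ : K ≫ commaP₀ (𝟙 B) u = fst _ _ ≫ commaP₀ (𝟙 B) u

end QCat

namespace QCat
open CategoryTheory Simplicial Opposite MonoidalCategory CartesianMonoidalCategory


/-! ## Machinery: trivial fibrations lift against levelwise injections -/

open SimplexCategory in
lemma exists_section_fix {x : SimplexCategory} {n : ℕ} (φ : x ⟶ ⦋n⦌)
    (hφ : Function.Surjective φ.toOrderHom) (i : Fin (x.len + 1)) :
    ∃ ξ : (⦋n⦌ : SimplexCategory) ⟶ x, ξ ≫ φ = 𝟙 _ ∧ ξ.toOrderHom (φ.toOrderHom i) = i := by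
  set f := φ.toOrderHom with hf
  have hne2 : ∀ j : Fin (n+1), (Finset.univ.filter fun k => f k = j).Nonempty := by
    intro j
    obtain ⟨k, hk⟩ := hφ j
    exact ⟨k, by simpa using hk⟩
  have hne1 : ∀ j : Fin (n+1), j ≤ f i →
      (Finset.univ.filter fun k => f k = j ∧ k ≤ i).Nonempty := by
    intro j hj
    obtain ⟨k, hk⟩ := hφ j
    rcases le_or_gt k i with h | h
    · exact ⟨k, by simp only [Finset.mem_filter, Finset.mem_univ, true_and]; exact ⟨hk, h⟩⟩
    · have : f i ≤ f k := f.monotone h.le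
      rw [hk] at this
      have hji : j = f i := le_antisymm hj this
      exact ⟨i, by simp only [Finset.mem_filter, Finset.mem_univ, true_and]; exact ⟨hji.symm, le_rfl⟩⟩
  classical
  set g : Fin (n+1) → Fin (x.len + 1) := fun j =>
    if h : j ≤ f i then (Finset.univ.filter fun k => f k = j ∧ k ≤ i).max' (hne1 j h)
    else (Finset.univ.filter fun k => f k = j).min' (hne2 j) with hg
  have hmem : ∀ j, f (g j) = j := by
    intro j
    rw [hg]
    dsimp only
    split
    · have := Finset.max'_mem _ (hne1 j (by assumption))
      simp only [Finset.mem_filter] at this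
      exact this.2.1
    · have := Finset.min'_mem _ (hne2 j)
      simp only [Finset.mem_filter] at this
      exact this.2
  have hmono : Monotone g := by
    intro j1 j2 h
    rcases eq_or_lt_of_le h with rfl | h
    · exact le_rfl
    · have h1 : f (g j1) = j1 := hmem j1
      have h2 : f (g j2) = j2 := hmem j2
      by_contra hc
      push_neg at hc
      have : f (g j2) ≤ f (g j1) := f.monotone hc.le
      rw [h1, h2] at this
      exact absurd this (not_le.mpr h)
  refine ⟨SimplexCategory.Hom.mk ⟨g, hmono⟩, ?_, ?_⟩
  · apply SimplexCategory.Hom.ext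
    apply OrderHom.ext
    funext j
    exact hmem j
  · show g (f i) = i
    rw [hg]
    dsimp only
    rw [dif_pos le_rfl]
    apply le_antisymm
    · apply Finset.max'_le
      intro k hk
      simp only [Finset.mem_filter] at hk
      exact hk.2.2
    · exact Finset.le_max' _ i (by simp)

open SimplexCategory in
lemma epi_eq_of_sections {x : SimplexCategory} {n : ℕ} (φ ψ : x ⟶ ⦋n⦌)
    (hφ : Function.Surjective φ.toOrderHom)
    (h : ∀ ξ : (⦋n⦌ : SimplexCategory) ⟶ x, ξ ≫ φ = 𝟙 _ → ξ ≫ ψ = 𝟙 _) : ψ = φ := by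
  apply SimplexCategory.Hom.ext
  apply OrderHom.ext
  funext i
  obtain ⟨ξ, hξ1, hξ2⟩ := exists_section_fix φ hφ i
  have := h ξ hξ1
  have happ : ψ.toOrderHom (ξ.toOrderHom (φ.toOrderHom i)) = φ.toOrderHom i := by
    have := congrArg (fun χ => SimplexCategory.Hom.toOrderHom χ (φ.toOrderHom i)) this
    simpa using this
  rw [hξ2] at happ
  exact happ




/-- The identity simplex of `Δ[n]`. -/
def stdId (n : ℕ) : (Δ[n] : SSet.{0}) _⦋n⦌ := SSet.stdSimplex.objEquiv.symm (𝟙 _)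

lemma stdId_objEquiv (n : ℕ) : SSet.stdSimplex.objEquiv (stdId n) = 𝟙 _ := rfl

section KeyLift

variable {E B X Y : SSet.{0}}

/-- A partial lift in a lifting problem of `i : X ⟶ Y` against `p : E ⟶ B`. -/
structure PLift (p : E ⟶ B) (i : X ⟶ Y) (u : X ⟶ E) (v : Y ⟶ B) where
  D : ∀ m : SimplexCategoryᵒᵖ, Set (Y.obj m)
  closed : ∀ {m m' : SimplexCategoryᵒᵖ} (φ : m ⟶ m') {x : Y.obj m}, x ∈ D m → Y.map φ x ∈ D m'
  mem_i : ∀ {m : SimplexCategoryᵒᵖ} (a : X.obj m), i.app m a ∈ D m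
  L : ∀ (m : SimplexCategoryᵒᵖ) (x : Y.obj m), x ∈ D m → E.obj m
  nat : ∀ {m m' : SimplexCategoryᵒᵖ} (φ : m ⟶ m') (x : Y.obj m) (hx : x ∈ D m)
    (hx' : Y.map φ x ∈ D m'), L m' (Y.map φ x) hx' = E.map φ (L m x hx)
  comp_i : ∀ {m : SimplexCategoryᵒᵖ} (a : X.obj m), L m (i.app m a) (mem_i a) = u.app m a
  liesOver : ∀ {m : SimplexCategoryᵒᵖ} (x : Y.obj m) (hx : x ∈ D m), p.app m (L m x hx) = v.app m x

variable {p : E ⟶ B} {i : X ⟶ Y} {u : X ⟶ E} {v : Y ⟶ B}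

lemma PLift.L_congr (P : PLift p i u v) {m : SimplexCategoryᵒᵖ} {x x' : Y.obj m} (h : x = x')
    (hx : x ∈ P.D m) (hx' : x' ∈ P.D m) : P.L m x hx = P.L m x' hx' := by
  subst h; rfl

/-- The base partial lift, defined on the image of `i`. -/
noncomputable def basePLift (hi : ∀ m, Function.Injective (i.app m)) (hsq : i ≫ v = u ≫ p) :
    PLift p i u v where
  D m := Set.range (i.app m)
  closed := by
    intro m m' φ x hx
    obtain ⟨a, ha⟩ := hx
    exact ⟨X.map φ a, by rw [FunctorToTypes.naturality i φ, ha]⟩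
  mem_i a := ⟨a, rfl⟩
  L m x hx := u.app m hx.choose
  nat {m m'} φ x hx hx' := by
    show u.app m' hx'.choose = E.map φ (u.app m hx.choose)
    have h1 : i.app m' hx'.choose = Y.map φ x := hx'.choose_spec
    have h2 : i.app m hx.choose = x := hx.choose_spec
    have h3 : i.app m' (X.map φ hx.choose) = Y.map φ x := by
      rw [FunctorToTypes.naturality i φ, h2]
    have h4 : hx'.choose = X.map φ hx.choose := hi m' (h1.trans h3.symm)
    rw [h4, FunctorToTypes.naturality u φ]
  comp_i {m} a := by
    show u.app m _ = u.app m a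
    apply congrArg (u.app m)
    exact hi m (⟨a, rfl⟩ : ∃ b, i.app m b = i.app m a).choose_spec
  liesOver {m} x hx := by
    show p.app m (u.app m hx.choose) = v.app m x
    have h2 : i.app m hx.choose = x := hx.choose_spec
    have h5 : v.app m (i.app m hx.choose) = p.app m (u.app m hx.choose) :=
      ConcreteCategory.congr_hom (NatTrans.congr_app hsq m) hx.choose
    rw [← h5, h2]

/-- All faces of an `n`-simplex lie in the domain of the partial lift. -/
lemma faceMem (P : PLift p i u v) (n : ℕ)
    (hlow : ∀ m : SimplexCategoryᵒᵖ, m.unop.len < n → ∀ x : Y.obj m, x ∈ P.D m)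
    (z : Y.obj (op ⦋n⦌)) {k : SimplexCategoryᵒᵖ} (θ : k.unop ⟶ ⦋n⦌)
    (hθ : ¬ Function.Surjective θ.toOrderHom) : Y.map θ.op z ∈ P.D k := by
  cases n with
  | zero =>
    exfalso
    apply hθ
    intro b
    exact ⟨0, Subsingleton.elim (α := Fin 1) _ _⟩
  | succ n' =>
    rw [Function.Surjective] at hθ
    push_neg at hθ
    obtain ⟨j, hj⟩ := hθ
    have hspec : SimplexCategory.factor_δ (m := k.unop.len) θ j ≫ SimplexCategory.δ j = θ :=
      SimplexCategory.factor_δ_spec (m := k.unop.len) θ j (fun l => hj l)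
    have hface : Y.map (SimplexCategory.δ j).op z ∈ P.D (op ⦋n'⦌) :=
      hlow _ (by simp) _
    have hcl := P.closed (SimplexCategory.factor_δ (m := k.unop.len) θ j).op hface
    rw [← FunctorToTypes.map_comp_apply, ← op_comp, hspec] at hcl
    exact hcl

/-- A surjective image of a simplex outside the domain is outside the domain. -/
lemma surjNotMem (P : PLift p i u v) (n : ℕ)
    (z : Y.obj (op ⦋n⦌)) (hz : z ∉ P.D (op ⦋n⦌)) {k : SimplexCategoryᵒᵖ}
    (ψ : k.unop ⟶ ⦋n⦌) (hx : Y.map ψ.op z ∈ P.D k) :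
    ¬ Function.Surjective ψ.toOrderHom := by
  intro hψ
  obtain ⟨ξ, hξ, -⟩ := exists_section_fix ψ hψ 0
  have h1 : Y.map ξ.op (Y.map ψ.op z) = z := by
    rw [← FunctorToTypes.map_comp_apply, ← op_comp, hξ]
    simp
  exact hz (h1 ▸ P.closed ξ.op hx)

/-- Boundary sphere of a simplex `z` in `E`, via the partial lift. -/
noncomputable def bdrySphere (P : PLift p i u v) (n : ℕ)
    (hlow : ∀ m : SimplexCategoryᵒᵖ, m.unop.len < n → ∀ x : Y.obj m, x ∈ P.D m)
    (z : Y.obj (op ⦋n⦌)) : (∂Δ[n] : SSet.{0}) ⟶ E where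
  app k := TypeCat.ofHom fun α => P.L k (Y.map (α.1.down).op z) (faceMem P n hlow z α.1.down α.2)
  naturality {k k'} φ := by
    apply ConcreteCategory.hom_ext; intro α
    show P.L k' (Y.map (((∂Δ[n] : SSet.{0}).map φ α).1.down).op z) _
      = E.map φ (P.L k (Y.map (α.1.down).op z) _)
    have e1 : Y.map (((∂Δ[n] : SSet.{0}).map φ α).1.down).op z
        = Y.map φ (Y.map (α.1.down).op z) := by
      show Y.map ((α.1.down).op ≫ φ) z = _
      rw [FunctorToTypes.map_comp_apply]
    have hm2 : Y.map φ (Y.map (α.1.down).op z) ∈ P.D k' :=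
      P.closed φ (faceMem P n hlow z α.1.down α.2)
    rw [P.L_congr e1 (faceMem P n hlow z _ ((∂Δ[n] : SSet.{0}).map φ α).2) hm2]
    exact P.nat φ _ _ _

/-- The bottom face of the filler square. -/
noncomputable def bdryBase (v : Y ⟶ B) (n : ℕ) (z : Y.obj (op ⦋n⦌)) : (Δ[n] : SSet.{0}) ⟶ B :=
  (SSet.yonedaEquiv (X := B) (n := ⦋n⦌)).symm (v.app (op ⦋n⦌) z)

lemma bdrySq (P : PLift p i u v) (n : ℕ)
    (hlow : ∀ m : SimplexCategoryᵒᵖ, m.unop.len < n → ∀ x : Y.obj m, x ∈ P.D m)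
    (z : Y.obj (op ⦋n⦌)) :
    CommSq (bdrySphere P n hlow z) ((∂Δ[n]).ι) p (bdryBase v n z) := by
  constructor
  apply NatTrans.ext
  funext k
  apply ConcreteCategory.hom_ext
  intro α
  show p.app k (P.L k (Y.map (α.1.down).op z) _) = B.map (α.1.down).op (v.app (op ⦋n⦌) z)
  rw [P.liesOver, FunctorToTypes.naturality v]

/-- The filler of a simplex `z`, obtained from the lifting property. -/
noncomputable def filler (P : PLift p i u v) (n : ℕ)
    (hlow : ∀ m : SimplexCategoryᵒᵖ, m.unop.len < n → ∀ x : Y.obj m, x ∈ P.D m)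
    (hp : IsTrivialFibration p) (z : Y.obj (op ⦋n⦌)) : E.obj (op ⦋n⦌) :=
  haveI := hp n
  (bdrySq P n hlow z).lift.app (op ⦋n⦌) ((stdId n))

lemma filler_face (P : PLift p i u v) (n : ℕ)
    (hlow : ∀ m : SimplexCategoryᵒᵖ, m.unop.len < n → ∀ x : Y.obj m, x ∈ P.D m)
    (hp : IsTrivialFibration p) (z : Y.obj (op ⦋n⦌)) {k : SimplexCategoryᵒᵖ}
    (θ : k.unop ⟶ ⦋n⦌)
    (hθ : ¬ Function.Surjective θ.toOrderHom) (hm : Y.map θ.op z ∈ P.D k) :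
    E.map θ.op (filler P n hlow hp z) = P.L k (Y.map θ.op z) hm := by
  haveI := hp n
  have hnat : (bdrySq P n hlow z).lift.app k ((Δ[n] : SSet.{0}).map θ.op
        ((stdId n)))
      = E.map θ.op ((bdrySq P n hlow z).lift.app (op ⦋n⦌) ((stdId n))) :=
    FunctorToTypes.naturality (bdrySq P n hlow z).lift θ.op _
  have e1 : (Δ[n] : SSet.{0}).map θ.op ((stdId n)) = ULift.up θ := by
    apply (SSet.stdSimplex.objEquiv).injective
    rw [SSet.stdSimplex.map_apply, Equiv.apply_symm_apply, stdId_objEquiv,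
      Category.comp_id]
    rfl
  have h2 : (bdrySq P n hlow z).lift.app k (ULift.up θ) = P.L k (Y.map θ.op z) hm :=
    ConcreteCategory.congr_hom (NatTrans.congr_app (bdrySq P n hlow z).fac_left k)
      (⟨ULift.up θ, hθ⟩ : (∂Δ[n] : SSet.{0}).obj k)
  show E.map θ.op ((bdrySq P n hlow z).lift.app (op ⦋n⦌) ((stdId n))) = _
  rw [← hnat, e1, h2]

lemma filler_over (P : PLift p i u v) (n : ℕ)
    (hlow : ∀ m : SimplexCategoryᵒᵖ, m.unop.len < n → ∀ x : Y.obj m, x ∈ P.D m)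
    (hp : IsTrivialFibration p) (z : Y.obj (op ⦋n⦌)) :
    p.app (op ⦋n⦌) (filler P n hlow hp z) = v.app (op ⦋n⦌) z := by
  haveI := hp n
  have h3 : p.app (op ⦋n⦌) ((bdrySq P n hlow (v := v) z).lift.app (op ⦋n⦌)
        ((stdId n)))
      = (bdryBase v n z).app (op ⦋n⦌) ((stdId n)) :=
    ConcreteCategory.congr_hom (NatTrans.congr_app (bdrySq P n hlow (v := v) z).fac_right (op ⦋n⦌))
      ((stdId n))
  show p.app (op ⦋n⦌) ((bdrySq P n hlow z).lift.app (op ⦋n⦌) ((stdId n))) = _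
  rw [h3]
  show B.map (𝟙 (⦋n⦌ : SimplexCategory)).op _ = _
  simp

end KeyLift

section Extend

variable {E B X Y : SSet.{0}} {p : E ⟶ B} {i : X ⟶ Y} {u : X ⟶ E} {v : Y ⟶ B}

/-- The extended domain. -/
def extD (P : PLift p i u v) (n : ℕ) (m : SimplexCategoryᵒᵖ) : Set (Y.obj m) :=
  {x | x ∈ P.D m ∨ ∃ (z : Y.obj (op ⦋n⦌)) (ψ : m.unop ⟶ ⦋n⦌),
    z ∉ P.D (op ⦋n⦌) ∧ x = Y.map ψ.op z}

lemma extD_cases {P : PLift p i u v} {n : ℕ} {m : SimplexCategoryᵒᵖ} {x : Y.obj m}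
    (hx : x ∈ extD P n m) :
    x ∈ P.D m ∨ ∃ (z : Y.obj (op ⦋n⦌)) (ψ : m.unop ⟶ ⦋n⦌),
      z ∉ P.D (op ⦋n⦌) ∧ x = Y.map ψ.op z := hx

lemma map_unop_comp {m m' : SimplexCategoryᵒᵖ} (φ : m ⟶ m') {n : ℕ} (ψ : m.unop ⟶ ⦋n⦌)
    (z : Y.obj (op ⦋n⦌)) :
    Y.map (φ.unop ≫ ψ).op z = Y.map φ (Y.map ψ.op z) := by
  rw [op_comp, Quiver.Hom.op_unop, FunctorToTypes.map_comp_apply]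

variable (P : PLift p i u v) (n : ℕ)
  (hlow : ∀ m : SimplexCategoryᵒᵖ, m.unop.len < n → ∀ x : Y.obj m, x ∈ P.D m)
  (hp : IsTrivialFibration p)

lemma keyWD {m : SimplexCategoryᵒᵖ} (z z' : Y.obj (op ⦋n⦌))
    (hz : z ∉ P.D (op ⦋n⦌)) (_hz' : z' ∉ P.D (op ⦋n⦌)) (ψ : m.unop ⟶ ⦋n⦌) (ψ' : m.unop ⟶ ⦋n⦌)
    (heq : Y.map ψ.op z = Y.map ψ'.op z') (hnm : Y.map ψ.op z ∉ P.D m) :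
    E.map ψ.op (filler P n hlow hp z) = E.map ψ'.op (filler P n hlow hp z') := by
  have hψs : Function.Surjective ψ.toOrderHom := by
    by_contra h
    exact hnm (faceMem P n hlow z ψ h)
  have hker : ∀ ξ : (⦋n⦌ : SimplexCategory) ⟶ m.unop, ξ ≫ ψ = 𝟙 _ →
      Y.map (ξ ≫ ψ').op z' = z := by
    intro ξ hξ
    rw [op_comp, FunctorToTypes.map_comp_apply, ← heq, ← FunctorToTypes.map_comp_apply,
      ← op_comp, hξ]
    simp
  have hsec : ∀ ξ : (⦋n⦌ : SimplexCategory) ⟶ m.unop, ξ ≫ ψ = 𝟙 _ → ξ ≫ ψ' = 𝟙 _ := by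
    intro ξ hξ
    have h1 := hker ξ hξ
    have hs : Function.Surjective (ξ ≫ ψ').toOrderHom := by
      by_contra h
      exact hz (h1 ▸ faceMem P n hlow z' (ξ ≫ ψ') h)
    haveI : Epi (ξ ≫ ψ') := SimplexCategory.epi_iff_surjective.mpr hs
    exact SimplexCategory.eq_id_of_epi _
  have hψψ' : ψ' = ψ := epi_eq_of_sections ψ ψ' hψs hsec
  have hzz' : z = z' := by
    obtain ⟨ξ, hξ, -⟩ := exists_section_fix ψ hψs 0
    have h1 := hker ξ hξ
    rw [hsec ξ hξ] at h1
    simpa using h1.symm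
  rw [hψψ', hzz']

lemma fillerValOnD (z : Y.obj (op ⦋n⦌)) (hz : z ∉ P.D (op ⦋n⦌)) {m : SimplexCategoryᵒᵖ}
    (θ : m.unop ⟶ ⦋n⦌) (h : Y.map θ.op z ∈ P.D m) :
    E.map θ.op (filler P n hlow hp z) = P.L m (Y.map θ.op z) h :=
  filler_face P n hlow hp z θ (surjNotMem P n z hz θ h) h

open Classical in
/-- The extended partial lift function. -/
noncomputable def extL (m : SimplexCategoryᵒᵖ) (x : Y.obj m) (hx : x ∈ extD P n m) :
    E.obj m :=
  if h : x ∈ P.D m then P.L m x h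
  else
    E.map ((extD_cases hx).resolve_left h).choose_spec.choose.op
      (filler P n hlow hp ((extD_cases hx).resolve_left h).choose)

lemma extL_eq_mem {m : SimplexCategoryᵒᵖ} (x : Y.obj m) (hx : x ∈ extD P n m)
    (h : x ∈ P.D m) : extL P n hlow hp m x hx = P.L m x h := by
  unfold extL
  rw [dif_pos h]

lemma extL_eq_new {m : SimplexCategoryᵒᵖ} (x : Y.obj m) (hx : x ∈ extD P n m)
    (z : Y.obj (op ⦋n⦌)) (ψ : m.unop ⟶ ⦋n⦌) (hz : z ∉ P.D (op ⦋n⦌))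
    (hxe : x = Y.map ψ.op z) :
    extL P n hlow hp m x hx = E.map ψ.op (filler P n hlow hp z) := by
  by_cases h : x ∈ P.D m
  · rw [extL_eq_mem P n hlow hp x hx h]
    subst hxe
    exact (fillerValOnD P n hlow hp z hz ψ h).symm
  · unfold extL
    rw [dif_neg h]
    set hnew := (extD_cases hx).resolve_left h with hhnew
    refine keyWD P n hlow hp _ _ hnew.choose_spec.choose_spec.1 hz _ _ ?_ ?_
    · rw [← hnew.choose_spec.choose_spec.2, hxe]
    · rw [← hnew.choose_spec.choose_spec.2]
      exact h

/-- A partial lift extension. -/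
structure PLiftExt (P : PLift p i u v) (n : ℕ) where
  Q : PLift p i u v
  le : ∀ (m : SimplexCategoryᵒᵖ) (x : Y.obj m), x ∈ P.D m → x ∈ Q.D m
  agree : ∀ (m : SimplexCategoryᵒᵖ) (x : Y.obj m) (hx : x ∈ P.D m) (hx' : x ∈ Q.D m),
    Q.L m x hx' = P.L m x hx
  full : ∀ x : Y.obj (op ⦋n⦌), x ∈ Q.D (op ⦋n⦌)

/-- Extending a partial lift over all `n`-simplices. -/
noncomputable def extendPLift : PLiftExt P n where
  Q :=
  { D := extD P n
    closed := by
      intro m m' φ x hx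
      rcases extD_cases hx with h | ⟨z, ψ, hz, rfl⟩
      · exact Or.inl (P.closed φ h)
      · exact Or.inr ⟨z, φ.unop ≫ ψ, hz, (map_unop_comp φ ψ z).symm⟩
    mem_i := fun a => Or.inl (P.mem_i a)
    L := extL P n hlow hp
    nat := by
      intro m m' φ x hx hx'
      by_cases h : x ∈ P.D m
      · rw [extL_eq_mem P n hlow hp x hx h,
          extL_eq_mem P n hlow hp _ hx' (P.closed φ h)]
        exact P.nat φ x h _
      · obtain ⟨z, ψ, hz, hxe⟩ := (extD_cases hx).resolve_left h
        have hxe' : Y.map φ x = Y.map (φ.unop ≫ ψ).op z := by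
          rw [hxe, map_unop_comp]
        rw [extL_eq_new P n hlow hp x hx z ψ hz hxe,
          extL_eq_new P n hlow hp _ hx' z (φ.unop ≫ ψ) hz hxe',
          op_comp, Quiver.Hom.op_unop, FunctorToTypes.map_comp_apply]
    comp_i := by
      intro m a
      refine (extL_eq_mem P n hlow hp _ _ (P.mem_i a)).trans ?_
      exact P.comp_i a
    liesOver := by
      intro m x hx
      by_cases h : x ∈ P.D m
      · rw [extL_eq_mem P n hlow hp x hx h]
        exact P.liesOver x h
      · obtain ⟨z, ψ, hz, hxe⟩ := (extD_cases hx).resolve_left h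
        rw [extL_eq_new P n hlow hp x hx z ψ hz hxe,
          FunctorToTypes.naturality p ψ.op, filler_over P n hlow hp z, hxe]
        exact (FunctorToTypes.naturality v ψ.op z).symm }
  le := fun m x h => Or.inl h
  agree := fun m x hx hx' => extL_eq_mem P n hlow hp x hx' hx
  full := fun x => by
    by_cases h : x ∈ P.D (op ⦋n⦌)
    · exact Or.inl h
    · refine Or.inr ⟨x, 𝟙 (⦋n⦌ : SimplexCategory), h, ?_⟩
      simp

end Extend

section Tower

variable {E B X Y : SSet.{0}} {p : E ⟶ B} {i : X ⟶ Y} {u : X ⟶ E} {v : Y ⟶ B}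
variable (hp : IsTrivialFibration p) (hi : ∀ m, Function.Injective (i.app m))
  (hsq : i ≫ v = u ≫ p)

/-- The tower of partial lifts over the skeleta. -/
noncomputable def tower :
    ∀ _n : ℕ, {P : PLift p i u v //
      ∀ m : SimplexCategoryᵒᵖ, m.unop.len < _n → ∀ x : Y.obj m, x ∈ P.D m} := fun n0 =>
  Nat.rec (motive := fun _n => {P : PLift p i u v //
      ∀ m : SimplexCategoryᵒᵖ, m.unop.len < _n → ∀ x : Y.obj m, x ∈ P.D m})
  ⟨basePLift hi hsq, fun _ hm _ => absurd hm (Nat.not_lt_zero _)⟩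
  (fun n tn =>
    ⟨(extendPLift tn.1 n tn.2 hp).Q, by
      intro m hm x
      rcases Nat.lt_succ_iff_lt_or_eq.mp hm with h | h
      · exact (extendPLift tn.1 n tn.2 hp).le m x (tn.2 m h x)
      · have hm2 : m = op (⦋n⦌ : SimplexCategory) := by rw [← h, SimplexCategory.mk_len, op_unop]
        subst hm2
        exact (extendPLift tn.1 n tn.2 hp).full x⟩) n0

lemma tower_le {n n' : ℕ} (h : n ≤ n') (m : SimplexCategoryᵒᵖ) (x : Y.obj m) :
    x ∈ (tower hp hi hsq n).1.D m → x ∈ (tower hp hi hsq n').1.D m := by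
  induction h with
  | refl => exact id
  | @step k h ih =>
    intro hx
    exact (extendPLift (tower hp hi hsq k).1 k (tower hp hi hsq k).2 hp).le m x (ih hx)

lemma tower_agree {n n' : ℕ} (h : n ≤ n') (m : SimplexCategoryᵒᵖ) (x : Y.obj m)
    (hx : x ∈ (tower hp hi hsq n).1.D m) (hx' : x ∈ (tower hp hi hsq n').1.D m) :
    (tower hp hi hsq n').1.L m x hx' = (tower hp hi hsq n).1.L m x hx := by
  induction h with
  | refl => rfl
  | @step k h ih =>
    have hk : x ∈ (tower hp hi hsq k).1.D m := tower_le hp hi hsq h m x hx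
    exact ((extendPLift (tower hp hi hsq k).1 k (tower hp hi hsq k).2 hp).agree m x hk
      hx').trans (ih hk)

/-- Key lemma: a trivial fibration has the right lifting property against any
levelwise-injective map of simplicial sets. -/
lemma tf_lift (hp : IsTrivialFibration p) (hi : ∀ m, Function.Injective (i.app m))
    (hsq : i ≫ v = u ≫ p) : ∃ l : Y ⟶ E, i ≫ l = u ∧ l ≫ p = v := by
  have hmem : ∀ (m : SimplexCategoryᵒᵖ) (x : Y.obj m),
      x ∈ (tower hp hi hsq (m.unop.len + 1)).1.D m :=
    fun m x => (tower hp hi hsq (m.unop.len + 1)).2 m (Nat.lt_succ_self _) x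
  refine ⟨{ app := fun m => TypeCat.ofHom fun x => (tower hp hi hsq (m.unop.len + 1)).1.L m x (hmem m x),
            naturality := ?_ }, ?_, ?_⟩
  · intro m m' φ
    apply ConcreteCategory.hom_ext; intro x
    show (tower hp hi hsq (m'.unop.len + 1)).1.L m' (Y.map φ x) (hmem m' (Y.map φ x))
      = E.map φ ((tower hp hi hsq (m.unop.len + 1)).1.L m x (hmem m x))
    set N := max (m.unop.len + 1) (m'.unop.len + 1) with hN
    have h1 : x ∈ (tower hp hi hsq N).1.D m :=
      tower_le hp hi hsq (le_max_left _ _) m x (hmem m x)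
    have h2 : Y.map φ x ∈ (tower hp hi hsq N).1.D m' :=
      tower_le hp hi hsq (le_max_right _ _) m' (Y.map φ x) (hmem m' (Y.map φ x))
    rw [← tower_agree hp hi hsq (le_max_right _ _) m' (Y.map φ x) (hmem m' _) h2,
      ← tower_agree hp hi hsq (le_max_left _ _) m x (hmem m x) h1]
    exact (tower hp hi hsq N).1.nat φ x h1 h2
  · apply NatTrans.ext
    funext m
    apply ConcreteCategory.hom_ext
    intro a
    show (tower hp hi hsq (m.unop.len + 1)).1.L m (i.app m a) (hmem m _) = u.app m a
    exact (tower hp hi hsq (m.unop.len + 1)).1.comp_i a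
  · apply NatTrans.ext
    funext m
    apply ConcreteCategory.hom_ext
    intro x
    show p.app m ((tower hp hi hsq (m.unop.len + 1)).1.L m x (hmem m x)) = v.app m x
    exact (tower hp hi hsq (m.unop.len + 1)).1.liesOver x (hmem m x)

end Tower



/-! ## Lifting squares for comma quasi-categories -/

lemma const1_of_not_surj {m : SimplexCategoryᵒᵖ} (τ : (Δ[1] : SSet.{0}).obj m)
    (h : ¬ Function.Surjective (SSet.stdSimplex.asOrderHom τ)) :
    τ = SSet.stdSimplex.const 1 (SSet.stdSimplex.asOrderHom τ 0) m := by
  apply (SSet.stdSimplex.objEquiv).injective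
  apply SimplexCategory.Hom.ext
  apply OrderHom.ext
  funext l
  show SSet.stdSimplex.asOrderHom τ l = SSet.stdSimplex.asOrderHom τ 0
  by_contra hc
  apply h
  intro b
  have h0 : SSet.stdSimplex.asOrderHom τ 0 ≤ SSet.stdSimplex.asOrderHom τ l :=
    (SSet.stdSimplex.asOrderHom τ).monotone (Fin.zero_le l)
  have hb := b.isLt
  have h0' := (SSet.stdSimplex.asOrderHom τ 0).isLt
  have hl' := (SSet.stdSimplex.asOrderHom τ l).isLt
  have hne : (SSet.stdSimplex.asOrderHom τ 0 : Fin 2).val ≠ (SSet.stdSimplex.asOrderHom τ l).val :=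
    fun hh => hc (Fin.ext hh.symm)
  have hdisj : b.val = (SSet.stdSimplex.asOrderHom τ 0).val ∨ b.val = (SSet.stdSimplex.asOrderHom τ l).val := by
    have := Fin.le_iff_val_le_val.mp h0
    omega
  rcases hdisj with hh | hh
  · exact ⟨0, Fin.ext hh.symm⟩
  · exact ⟨l, Fin.ext hh.symm⟩

lemma const_not_surj (k : Fin 2) (m : SimplexCategoryᵒᵖ) :
    ¬ Function.Surjective (SSet.stdSimplex.asOrderHom (SSet.stdSimplex.const 1 k m)) := by
  intro hs
  obtain ⟨l, hl⟩ := hs ⟨1 - k.val, by omega⟩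
  have h2 : SSet.stdSimplex.asOrderHom (SSet.stdSimplex.const 1 k m) l = k := rfl
  rw [h2] at hl
  have h3 := congrArg Fin.val hl
  have h4 := k.isLt
  simp only [] at h3
  omega

lemma app_eq_map_yoneda {Z : SSet.{0}} {n : ℕ} (w : (Δ[n] : SSet.{0}) ⟶ Z)
    {m : SimplexCategoryᵒᵖ} (x : (Δ[n] : SSet.{0}).obj m) :
    w.app m x = Z.map (x.down).op (SSet.yonedaEquiv (X := Z) (n := ⦋n⦌) w) := by
  have h1 : (Δ[n] : SSet.{0}).map (x.down).op ((stdId n)) = x := by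
    apply (SSet.stdSimplex.objEquiv).injective
    rw [SSet.stdSimplex.map_apply, stdId_objEquiv, Category.comp_id]
    rfl
  calc w.app m x = w.app m ((Δ[n] : SSet.{0}).map (x.down).op ((stdId n))) := by
        rw [h1]
    _ = Z.map (x.down).op (w.app (op ⦋n⦌) ((stdId n))) :=
        FunctorToTypes.naturality w _ _

lemma stdmap_genSimp {a : SimplexCategory} {k : SimplexCategoryᵒᵖ} (χ : k.unop ⟶ a) :
    (SSet.stdSimplex.map χ).app k (genSimp k) = (SSet.stdSimplex.objEquiv).symm χ := by
  apply (SSet.stdSimplex.objEquiv).injective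
  show 𝟙 _ ≫ χ = _
  rw [Category.id_comp]
  exact (Equiv.apply_symm_apply _ _).symm

/-- The boundary of the prism `Δ[n] × Δ[1]`. -/
def prismBdry (n : ℕ) : SSet.{0} where
  obj m := {z : (Δ[n] ⊗ Δ[1] : SSet.{0}).obj m //
    ¬ Function.Surjective (SSet.stdSimplex.asOrderHom z.1) ∨ ¬ Function.Surjective (SSet.stdSimplex.asOrderHom z.2)}
  map {m m'} φ := TypeCat.ofHom fun z => ⟨(Δ[n] ⊗ Δ[1] : SSet.{0}).map φ z.1, by
    rcases z.2 with h | h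
    · exact Or.inl (fun hsur => h (Function.Surjective.of_comp hsur))
    · exact Or.inr (fun hsur => h (Function.Surjective.of_comp hsur))⟩
  map_id m := by
    apply ConcreteCategory.hom_ext; intro z
    apply Subtype.ext
    exact FunctorToTypes.map_id_apply (Δ[n] ⊗ Δ[1] : SSet.{0}) z.1
  map_comp φ ψ := by
    apply ConcreteCategory.hom_ext; intro z
    apply Subtype.ext
    exact FunctorToTypes.map_comp_apply (Δ[n] ⊗ Δ[1] : SSet.{0}) φ ψ z.1

/-- The inclusion of the prism boundary. -/
def prismIncl (n : ℕ) : prismBdry n ⟶ (Δ[n] ⊗ Δ[1] : SSet.{0}) where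
  app m := TypeCat.ofHom fun z => z.1
  naturality _ _ _ := rfl

/-- The data of a lifting problem for the induced map of comma quasi-categories. -/
structure CommaLiftData {A B C A' B' C' : SSet.{0}} (f : B ⟶ A) (g : C ⟶ A)
    (f' : B' ⟶ A') (g' : C' ⟶ A') (q : A ⟶ A') (r : B ⟶ B') (s : C ⟶ C')
    (hf : f ≫ q = r ≫ f') (hg : g ≫ q = s ≫ g') (n : ℕ) where
  t : (∂Δ[n] : SSet.{0}) ⟶ comma f g
  b : (Δ[n] : SSet.{0}) ⟶ comma f' g'
  bb : (Δ[n] : SSet.{0}) ⟶ B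
  c : (Δ[n] : SSet.{0}) ⟶ C
  hbb : (∂Δ[n]).ι ≫ bb = t ≫ commaP₀ f g
  hcc : (∂Δ[n]).ι ≫ c = t ≫ commaP₁ f g
  hbr : bb ≫ r = b ≫ commaP₀ f' g'
  hcs : c ≫ s = b ≫ commaP₁ f' g'
  hsq : t ≫ commaMap q r s hf hg = (∂Δ[n]).ι ≫ b

namespace CommaLiftData

variable {A B C A' B' C' : SSet.{0}} {f : B ⟶ A} {g : C ⟶ A}
    {f' : B' ⟶ A'} {g' : C' ⟶ A'} {q : A ⟶ A'} {r : B ⟶ B'} {s : C ⟶ C'}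
    {hf : f ≫ q = r ≫ f'} {hg : g ≫ q = s ≫ g'} {n : ℕ}
    (D : CommaLiftData f g f' g' q r s hf hg n)

open Classical in
/-- The partial map on the prism boundary. -/
noncomputable def uWfun (m : SimplexCategoryᵒᵖ) (z : (prismBdry n).obj m) : A.obj m :=
  if hx : ¬ Function.Surjective (SSet.stdSimplex.asOrderHom z.1.1) then
    (D.t.app m ⟨z.1.1, hx⟩).1.2.app m (genSimp m, z.1.2)
  else if SSet.stdSimplex.asOrderHom z.1.2 0 = 0 then f.app m (D.bb.app m z.1.1)
  else g.app m (D.c.app m z.1.1)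

lemma uWfun_nonsurj {m : SimplexCategoryᵒᵖ} (z : (prismBdry n).obj m)
    (hx : ¬ Function.Surjective (SSet.stdSimplex.asOrderHom z.1.1)) :
    D.uWfun m z = (D.t.app m ⟨z.1.1, hx⟩).1.2.app m (genSimp m, z.1.2) := dif_pos hx

lemma uWfun_surj0 {m : SimplexCategoryᵒᵖ} (z : (prismBdry n).obj m)
    (hx : Function.Surjective (SSet.stdSimplex.asOrderHom z.1.1)) (hk : SSet.stdSimplex.asOrderHom z.1.2 0 = 0) :
    D.uWfun m z = f.app m (D.bb.app m z.1.1) := by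
  rw [uWfun, dif_neg (not_not.mpr hx), if_pos hk]

lemma uWfun_surj1 {m : SimplexCategoryᵒᵖ} (z : (prismBdry n).obj m)
    (hx : Function.Surjective (SSet.stdSimplex.asOrderHom z.1.1)) (hk : ¬ SSet.stdSimplex.asOrderHom z.1.2 0 = 0) :
    D.uWfun m z = g.app m (D.c.app m z.1.1) := by
  rw [uWfun, dif_neg (not_not.mpr hx), if_neg hk]

/-- The `B`-component of `t` is computed by `bb`. -/
lemma tB {m : SimplexCategoryᵒᵖ} (x : (Δ[n] : SSet.{0}).obj m)
    (hx : ¬ Function.Surjective (SSet.stdSimplex.asOrderHom x)) :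
    (D.t.app m ⟨x, hx⟩).1.1.2 = D.bb.app m x :=
  by have h := ConcreteCategory.congr_hom (NatTrans.congr_app D.hbb m) (⟨x, hx⟩ : (∂Δ[n] : SSet.{0}).obj m); exact h.symm

lemma tC {m : SimplexCategoryᵒᵖ} (x : (Δ[n] : SSet.{0}).obj m)
    (hx : ¬ Function.Surjective (SSet.stdSimplex.asOrderHom x)) :
    (D.t.app m ⟨x, hx⟩).1.1.1 = D.c.app m x :=
  by have h := ConcreteCategory.congr_hom (NatTrans.congr_app D.hcc m) (⟨x, hx⟩ : (∂Δ[n] : SSet.{0}).obj m); exact h.symm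

lemma t_endpoint0 {m : SimplexCategoryᵒᵖ} (x : (Δ[n] : SSet.{0}).obj m)
    (hx : ¬ Function.Surjective (SSet.stdSimplex.asOrderHom x)) :
    (D.t.app m ⟨x, hx⟩).1.2.app m (genSimp m, SSet.stdSimplex.const 1 0 m)
      = f.app m (D.bb.app m x) := by
  have h4 : (D.t.app m ⟨x, hx⟩).1.2.app m (genSimp m, SSet.stdSimplex.const 1 0 m)
      = f.app m (B.map (𝟙 m) (D.t.app m ⟨x, hx⟩).1.1.2) :=
    ConcreteCategory.congr_hom (NatTrans.congr_app (D.t.app m ⟨x, hx⟩).2.1 m) (genSimp m)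
  rw [FunctorToTypes.map_id_apply] at h4
  rw [h4, tB D x hx]

lemma t_endpoint1 {m : SimplexCategoryᵒᵖ} (x : (Δ[n] : SSet.{0}).obj m)
    (hx : ¬ Function.Surjective (SSet.stdSimplex.asOrderHom x)) :
    (D.t.app m ⟨x, hx⟩).1.2.app m (genSimp m, SSet.stdSimplex.const 1 1 m)
      = g.app m (D.c.app m x) := by
  have h4 : (D.t.app m ⟨x, hx⟩).1.2.app m (genSimp m, SSet.stdSimplex.const 1 1 m)
      = g.app m (C.map (𝟙 m) (D.t.app m ⟨x, hx⟩).1.1.1) :=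
    ConcreteCategory.congr_hom (NatTrans.congr_app (D.t.app m ⟨x, hx⟩).2.2 m) (genSimp m)
  rw [FunctorToTypes.map_id_apply] at h4
  rw [h4, tC D x hx]

lemma t_alpha_nat {m m' : SimplexCategoryᵒᵖ} (φ : m ⟶ m') (x : (Δ[n] : SSet.{0}).obj m)
    (hx : ¬ Function.Surjective (SSet.stdSimplex.asOrderHom x))
    (hx' : ¬ Function.Surjective (SSet.stdSimplex.asOrderHom ((Δ[n] : SSet.{0}).map φ x))) :
    (D.t.app m' ⟨(Δ[n] : SSet.{0}).map φ x, hx'⟩).1.2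
      = (SSet.stdSimplex.map φ.unop ▷ Δ[1]) ≫ (D.t.app m ⟨x, hx⟩).1.2 := by
  have h1 := FunctorToTypes.naturality D.t φ (⟨x, hx⟩ : (∂Δ[n] : SSet.{0}).obj m)
  exact congrArg (fun w => w.1.2) h1

lemma map_genSimp {m m' : SimplexCategoryᵒᵖ} (φ : m ⟶ m') :
    (SSet.stdSimplex.obj m.unop : SSet.{0}).map φ (genSimp m)
      = (SSet.stdSimplex.map φ.unop).app m' (genSimp m') := by
  apply (SSet.stdSimplex.objEquiv).injective
  show φ.unop ≫ 𝟙 _ = 𝟙 _ ≫ φ.unop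
  rw [Category.comp_id, Category.id_comp]

lemma uWfun_eval_gen {m m' : SimplexCategoryᵒᵖ} (φ : m ⟶ m') (x : (Δ[n] : SSet.{0}).obj m)
    (hx : ¬ Function.Surjective (SSet.stdSimplex.asOrderHom x))
    (hx' : ¬ Function.Surjective (SSet.stdSimplex.asOrderHom ((Δ[n] : SSet.{0}).map φ x)))
    (τ : (Δ[1] : SSet.{0}).obj m') :
    (D.t.app m' ⟨(Δ[n] : SSet.{0}).map φ x, hx'⟩).1.2.app m' (genSimp m', τ)
      = (D.t.app m ⟨x, hx⟩).1.2.app m' ((SSet.stdSimplex.map φ.unop).app m' (genSimp m'), τ)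
      := by
  rw [t_alpha_nat D φ x hx hx']
  rfl

lemma uW_nat {m m' : SimplexCategoryᵒᵖ} (φ : m ⟶ m') (z : (prismBdry n).obj m) :
    D.uWfun m' ((prismBdry n).map φ z) = A.map φ (D.uWfun m z) := by
  obtain ⟨⟨x, τ⟩, hz⟩ := z
  by_cases hx : ¬ Function.Surjective (SSet.stdSimplex.asOrderHom x)
  · have hx' : ¬ Function.Surjective (SSet.stdSimplex.asOrderHom ((Δ[n] : SSet.{0}).map φ x)) :=
      fun hs => hx (Function.Surjective.of_comp hs)
    have e1 : D.uWfun m' ((prismBdry n).map φ ⟨(x, τ), hz⟩)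
        = (D.t.app m' ⟨(Δ[n] : SSet.{0}).map φ x, hx'⟩).1.2.app m'
            (genSimp m', (Δ[1] : SSet.{0}).map φ τ) :=
      uWfun_nonsurj D ((prismBdry n).map φ ⟨(x, τ), hz⟩) hx'
    have e2 : D.uWfun m ⟨(x, τ), hz⟩ = (D.t.app m ⟨x, hx⟩).1.2.app m (genSimp m, τ) :=
      uWfun_nonsurj D _ hx
    rw [e1, e2, uWfun_eval_gen D φ x hx hx']
    have hnat := FunctorToTypes.naturality (D.t.app m ⟨x, hx⟩).1.2 φ
      ((genSimp m, τ) : (SSet.stdSimplex.obj m.unop ⊗ Δ[1] : SSet.{0}).obj m)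
    rw [← hnat]
    congr 1
  · have hxs := not_not.mp hx
    have hτ : ¬ Function.Surjective (SSet.stdSimplex.asOrderHom τ) := hz.resolve_left hx
    have hτc := const1_of_not_surj τ hτ
    have hk' : SSet.stdSimplex.asOrderHom ((Δ[1] : SSet.{0}).map φ τ) 0 = SSet.stdSimplex.asOrderHom τ 0 := by
      conv_lhs => rw [hτc]
      rw [map_const]
      rfl
    have e2map : D.bb.app m' ((Δ[n] : SSet.{0}).map φ x) = B.map φ (D.bb.app m x) :=
      FunctorToTypes.naturality D.bb φ x
    have e2mapc : D.c.app m' ((Δ[n] : SSet.{0}).map φ x) = C.map φ (D.c.app m x) :=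
      FunctorToTypes.naturality D.c φ x
    by_cases hk : SSet.stdSimplex.asOrderHom τ 0 = 0
    · have e2 : D.uWfun m ⟨(x, τ), hz⟩ = f.app m (D.bb.app m x) := uWfun_surj0 D _ hxs hk
      rw [e2]
      by_cases hx' : ¬ Function.Surjective (SSet.stdSimplex.asOrderHom ((Δ[n] : SSet.{0}).map φ x))
      · have hτ0 : τ = SSet.stdSimplex.const 1 0 m := hτc.trans (by rw [hk])
        have hτ0' : (Δ[1] : SSet.{0}).map φ τ = SSet.stdSimplex.const 1 0 m' := by
          rw [hτ0, map_const]
        have e1 : D.uWfun m' ((prismBdry n).map φ ⟨(x, τ), hz⟩)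
            = (D.t.app m' ⟨(Δ[n] : SSet.{0}).map φ x, hx'⟩).1.2.app m'
                (genSimp m', (Δ[1] : SSet.{0}).map φ τ) :=
          uWfun_nonsurj D ((prismBdry n).map φ ⟨(x, τ), hz⟩) hx'
        rw [e1, hτ0', t_endpoint0 D _ hx', e2map]
        exact FunctorToTypes.naturality f φ (D.bb.app m x)
      · have e1 : D.uWfun m' ((prismBdry n).map φ ⟨(x, τ), hz⟩)
            = f.app m' (D.bb.app m' ((Δ[n] : SSet.{0}).map φ x)) :=
          uWfun_surj0 D ((prismBdry n).map φ ⟨(x, τ), hz⟩) (not_not.mp hx') (hk'.trans hk)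
        rw [e1, e2map]
        exact FunctorToTypes.naturality f φ (D.bb.app m x)
    · have hk1 : SSet.stdSimplex.asOrderHom τ 0 = 1 := by
        have h4 := (SSet.stdSimplex.asOrderHom τ 0).isLt
        have h5 : (SSet.stdSimplex.asOrderHom τ 0).val ≠ 0 := fun hh => hk (Fin.ext hh)
        have h6 : ((1 : Fin 2)).val = 1 := rfl
        apply Fin.ext
        rw [h6]
        omega
      have e2 : D.uWfun m ⟨(x, τ), hz⟩ = g.app m (D.c.app m x) := uWfun_surj1 D _ hxs hk
      rw [e2]
      by_cases hx' : ¬ Function.Surjective (SSet.stdSimplex.asOrderHom ((Δ[n] : SSet.{0}).map φ x))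
      · have hτ1 : τ = SSet.stdSimplex.const 1 1 m := hτc.trans (by rw [hk1])
        have hτ1' : (Δ[1] : SSet.{0}).map φ τ = SSet.stdSimplex.const 1 1 m' := by
          rw [hτ1, map_const]
        have e1 : D.uWfun m' ((prismBdry n).map φ ⟨(x, τ), hz⟩)
            = (D.t.app m' ⟨(Δ[n] : SSet.{0}).map φ x, hx'⟩).1.2.app m'
                (genSimp m', (Δ[1] : SSet.{0}).map φ τ) :=
          uWfun_nonsurj D ((prismBdry n).map φ ⟨(x, τ), hz⟩) hx'
        rw [e1, hτ1', t_endpoint1 D _ hx', e2mapc]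
        exact FunctorToTypes.naturality g φ (D.c.app m x)
      · have e1 : D.uWfun m' ((prismBdry n).map φ ⟨(x, τ), hz⟩)
            = g.app m' (D.c.app m' ((Δ[n] : SSet.{0}).map φ x)) :=
          uWfun_surj1 D ((prismBdry n).map φ ⟨(x, τ), hz⟩) (not_not.mp hx')
            (fun hh => hk ((hk'.symm.trans hh)))
        rw [e1, e2mapc]
        exact FunctorToTypes.naturality g φ (D.c.app m x)

/-- The map on the prism boundary determined by the lifting data. -/
noncomputable def uW : prismBdry n ⟶ A where
  app m := TypeCat.ofHom (D.uWfun m)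
  naturality {m m'} φ := by
    apply ConcreteCategory.hom_ext; intro z
    exact D.uW_nat φ z

/-- The `A'`-valued homotopy determined by the bottom map of the square. -/
noncomputable def alpha' : (Δ[n] ⊗ Δ[1] : SSet.{0}) ⟶ A' :=
  (SSet.yonedaEquiv (X := (comma f' g')) (n := ⦋n⦌) D.b).1.2

lemma b_alpha {m : SimplexCategoryᵒᵖ} (x : (Δ[n] : SSet.{0}).obj m) :
    (D.b.app m x).1.2 = (SSet.stdSimplex.map x.down ▷ Δ[1]) ≫ D.alpha' :=
  congrArg (fun w => w.1.2) (app_eq_map_yoneda D.b x)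

lemma b_endpoint0 {m : SimplexCategoryᵒᵖ} (x : (Δ[n] : SSet.{0}).obj m) :
    D.alpha'.app m (x, SSet.stdSimplex.const 1 0 m) = f'.app m ((D.b.app m x).1.1.2) := by
  have h4 : D.alpha'.app m (x, SSet.stdSimplex.const 1 0 m)
      = f'.app m (B'.map (x.down).op (SSet.yonedaEquiv (X := (comma f' g')) (n := ⦋n⦌) D.b).1.1.2) :=
    ConcreteCategory.congr_hom (NatTrans.congr_app (SSet.yonedaEquiv (X := (comma f' g')) (n := ⦋n⦌) D.b).2.1 m) x
  rw [h4]
  exact congrArg (f'.app m) (congrArg (fun w => w.1.1.2) (app_eq_map_yoneda D.b x)).symm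

lemma b_endpoint1 {m : SimplexCategoryᵒᵖ} (x : (Δ[n] : SSet.{0}).obj m) :
    D.alpha'.app m (x, SSet.stdSimplex.const 1 1 m) = g'.app m ((D.b.app m x).1.1.1) := by
  have h4 : D.alpha'.app m (x, SSet.stdSimplex.const 1 1 m)
      = g'.app m (C'.map (x.down).op (SSet.yonedaEquiv (X := (comma f' g')) (n := ⦋n⦌) D.b).1.1.1) :=
    ConcreteCategory.congr_hom (NatTrans.congr_app (SSet.yonedaEquiv (X := (comma f' g')) (n := ⦋n⦌) D.b).2.2 m) x
  rw [h4]
  exact congrArg (g'.app m) (congrArg (fun w => w.1.1.1) (app_eq_map_yoneda D.b x)).symm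

lemma uW_comm : prismIncl n ≫ D.alpha' = D.uW ≫ q := by
  apply NatTrans.ext
  funext m
  apply ConcreteCategory.hom_ext
  intro z
  obtain ⟨⟨x, τ⟩, hz⟩ := z
  show D.alpha'.app m (x, τ) = q.app m (D.uWfun m ⟨(x, τ), hz⟩)
  by_cases hx : ¬ Function.Surjective (SSet.stdSimplex.asOrderHom x)
  · erw [uWfun_nonsurj D ⟨(x, τ), hz⟩ hx]
    have h1 : (D.t.app m ⟨x, hx⟩).1.2 ≫ q = (D.b.app m x).1.2 := by
      have h2 := ConcreteCategory.congr_hom (NatTrans.congr_app D.hsq m) (⟨x, hx⟩ : (∂Δ[n] : SSet.{0}).obj m)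
      exact congrArg (fun w => w.1.2) h2
    have h3 : q.app m ((D.t.app m ⟨x, hx⟩).1.2.app m (genSimp m, τ))
        = ((D.t.app m ⟨x, hx⟩).1.2 ≫ q).app m (genSimp m, τ) := rfl
    rw [h3, h1, b_alpha D x]
    show D.alpha'.app m (x, τ)
      = D.alpha'.app m ((SSet.stdSimplex.map x.down).app m (genSimp m), τ)
    have e9 : (SSet.stdSimplex.map x.down).app m (genSimp m) = x := by
      rw [stdmap_genSimp]
      rfl
    rw [e9]
  · have hxs := not_not.mp hx
    have hτ : ¬ Function.Surjective (SSet.stdSimplex.asOrderHom τ) := hz.resolve_left hx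
    have hτc := const1_of_not_surj τ hτ
    by_cases hk : SSet.stdSimplex.asOrderHom τ 0 = 0
    · erw [uWfun_surj0 D ⟨(x, τ), hz⟩ hxs hk]
      have h1 : q.app m (f.app m (D.bb.app m x)) = f'.app m (r.app m (D.bb.app m x)) :=
        ConcreteCategory.congr_hom (NatTrans.congr_app hf m) (D.bb.app m x)
      have h2 : r.app m (D.bb.app m x) = (D.b.app m x).1.1.2 :=
        ConcreteCategory.congr_hom (NatTrans.congr_app D.hbr m) x
      have hτ0 : τ = SSet.stdSimplex.const 1 0 m := hτc.trans (by rw [hk])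
      rw [h1, h2, hτ0]
      exact b_endpoint0 D x
    · erw [uWfun_surj1 D ⟨(x, τ), hz⟩ hxs hk]
      have h1 : q.app m (g.app m (D.c.app m x)) = g'.app m (s.app m (D.c.app m x)) :=
        ConcreteCategory.congr_hom (NatTrans.congr_app hg m) (D.c.app m x)
      have h2 : s.app m (D.c.app m x) = (D.b.app m x).1.1.1 :=
        ConcreteCategory.congr_hom (NatTrans.congr_app D.hcs m) x
      have hk1 : SSet.stdSimplex.asOrderHom τ 0 = 1 := by
        have h4 := (SSet.stdSimplex.asOrderHom τ 0).isLt
        have h5 : (SSet.stdSimplex.asOrderHom τ 0).val ≠ 0 := fun hh => hk (Fin.ext hh)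
        have h6 : ((1 : Fin 2)).val = 1 := rfl
        apply Fin.ext
        rw [h6]
        omega
      have hτ1 : τ = SSet.stdSimplex.const 1 1 m := hτc.trans (by rw [hk1])
      rw [h1, h2, hτ1]
      exact b_endpoint1 D x

end CommaLiftData


namespace CommaLiftData

variable {A B C A' B' C' : SSet.{0}} {f : B ⟶ A} {g : C ⟶ A}
    {f' : B' ⟶ A'} {g' : C' ⟶ A'} {q : A ⟶ A'} {r : B ⟶ B'} {s : C ⟶ C'}
    {hf : f ≫ q = r ≫ f'} {hg : g ≫ q = s ≫ g'} {n : ℕ}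
    (D : CommaLiftData f g f' g' q r s hf hg n)

lemma lift_endpoint0 (α : (Δ[n] ⊗ Δ[1] : SSet.{0}) ⟶ A)
    (hα1 : prismIncl n ≫ α = D.uW) :
    pt (0 : Fin 2) (Δ[n] : SSet.{0}) ≫ α = D.bb ≫ f := by
  apply NatTrans.ext
  funext m
  apply ConcreteCategory.hom_ext
  intro x
  show α.app m (x, SSet.stdSimplex.const 1 0 m) = f.app m (D.bb.app m x)
  have h5 : α.app m (x, SSet.stdSimplex.const 1 0 m)
      = D.uWfun m ⟨(x, SSet.stdSimplex.const 1 0 m), Or.inr (const_not_surj 0 m)⟩ :=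
    ConcreteCategory.congr_hom (NatTrans.congr_app hα1 m)
      (⟨(x, SSet.stdSimplex.const 1 0 m), Or.inr (const_not_surj 0 m)⟩ :
        (prismBdry n).obj m)
  rw [h5]
  by_cases hx : ¬ Function.Surjective (SSet.stdSimplex.asOrderHom x)
  · erw [uWfun_nonsurj D ⟨(x, SSet.stdSimplex.const 1 0 m), Or.inr (const_not_surj 0 m)⟩ hx]
    exact t_endpoint0 D x hx
  · exact uWfun_surj0 D _ (not_not.mp hx) rfl

lemma lift_endpoint1 (α : (Δ[n] ⊗ Δ[1] : SSet.{0}) ⟶ A)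
    (hα1 : prismIncl n ≫ α = D.uW) :
    pt (1 : Fin 2) (Δ[n] : SSet.{0}) ≫ α = D.c ≫ g := by
  apply NatTrans.ext
  funext m
  apply ConcreteCategory.hom_ext
  intro x
  show α.app m (x, SSet.stdSimplex.const 1 1 m) = g.app m (D.c.app m x)
  have h5 : α.app m (x, SSet.stdSimplex.const 1 1 m)
      = D.uWfun m ⟨(x, SSet.stdSimplex.const 1 1 m), Or.inr (const_not_surj 1 m)⟩ :=
    ConcreteCategory.congr_hom (NatTrans.congr_app hα1 m)
      (⟨(x, SSet.stdSimplex.const 1 1 m), Or.inr (const_not_surj 1 m)⟩ :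
        (prismBdry n).obj m)
  rw [h5]
  by_cases hx : ¬ Function.Surjective (SSet.stdSimplex.asOrderHom x)
  · erw [uWfun_nonsurj D ⟨(x, SSet.stdSimplex.const 1 1 m), Or.inr (const_not_surj 1 m)⟩ hx]
    exact t_endpoint1 D x hx
  · exact uWfun_surj1 D _ (not_not.mp hx)
      (fun hh => Nat.one_ne_zero (congrArg Fin.val hh))

lemma uW_interior (α : (Δ[n] ⊗ Δ[1] : SSet.{0}) ⟶ A)
    (hα1 : prismIncl n ≫ α = D.uW) {m : SimplexCategoryᵒᵖ} (x : (Δ[n] : SSet.{0}).obj m)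
    (hx : ¬ Function.Surjective (SSet.stdSimplex.asOrderHom x)) :
    (SSet.stdSimplex.map x.down ▷ Δ[1]) ≫ α = (D.t.app m ⟨x, hx⟩).1.2 := by
  apply NatTrans.ext
  funext k
  apply ConcreteCategory.hom_ext
  intro w
  obtain ⟨ψ, τ⟩ := w
  have hx' : ¬ Function.Surjective
      (SSet.stdSimplex.asOrderHom ((Δ[n] : SSet.{0}).map (ψ.down).op x)) :=
    fun hs => hx (Function.Surjective.of_comp hs)
  have h5 : α.app k ((Δ[n] : SSet.{0}).map (ψ.down).op x, τ)
      = D.uWfun k ⟨((Δ[n] : SSet.{0}).map (ψ.down).op x, τ), Or.inl hx'⟩ :=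
    ConcreteCategory.congr_hom (NatTrans.congr_app hα1 k)
      (⟨((Δ[n] : SSet.{0}).map (ψ.down).op x, τ), Or.inl hx'⟩ : (prismBdry n).obj k)
  have e6 : D.uWfun k ⟨((Δ[n] : SSet.{0}).map (ψ.down).op x, τ), Or.inl hx'⟩
      = (D.t.app k ⟨(Δ[n] : SSet.{0}).map (ψ.down).op x, hx'⟩).1.2.app k (genSimp k, τ) :=
    uWfun_nonsurj D _ hx'
  show α.app k ((Δ[n] : SSet.{0}).map (ψ.down).op x, τ) = (D.t.app m ⟨x, hx⟩).1.2.app k (ψ, τ)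
  rw [h5, e6, uWfun_eval_gen D (ψ.down).op x hx hx' τ]
  show (D.t.app m ⟨x, hx⟩).1.2.app k
    ((SSet.stdSimplex.map ψ.down).app k (genSimp k), τ) = _
  have e9 : (SSet.stdSimplex.map ψ.down).app k (genSimp k) = ψ := by
    rw [stdmap_genSimp]
    rfl
  rw [e9]

end CommaLiftData

/-- Trivial fibrations of cospans induce trivial fibrations between comma
quasi-categories. -/
theorem statement6 {A B C A' B' C' : SSet.{0}}
    [SSet.Quasicategory A] [SSet.Quasicategory B] [SSet.Quasicategory C]
    [SSet.Quasicategory A'] [SSet.Quasicategory B'] [SSet.Quasicategory C']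
    (f : B ⟶ A) (g : C ⟶ A) (f' : B' ⟶ A') (g' : C' ⟶ A')
    (r : B ⟶ B') (q : A ⟶ A') (s : C ⟶ C')
    (hr : IsTrivialFibration r) (hq : IsTrivialFibration q) (hs : IsTrivialFibration s)
    (hf : f ≫ q = r ≫ f') (hg : g ≫ q = s ≫ g') :
    IsTrivialFibration (commaMap q r s hf hg) := by
  intro n
  constructor
  intro t b sq
  haveI := hs n
  haveI := hr n
  have csq : CommSq (t ≫ commaP₁ f g) ((∂Δ[n]).ι) s (b ≫ commaP₁ f' g') := by
    constructor
    have hcs' : commaP₁ f g ≫ s = commaMap q r s hf hg ≫ commaP₁ f' g' := rfl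
    rw [Category.assoc, hcs', ← Category.assoc, sq.w, Category.assoc]
  have bsq : CommSq (t ≫ commaP₀ f g) ((∂Δ[n]).ι) r (b ≫ commaP₀ f' g') := by
    constructor
    have hbr' : commaP₀ f g ≫ r = commaMap q r s hf hg ≫ commaP₀ f' g' := rfl
    rw [Category.assoc, hbr', ← Category.assoc, sq.w, Category.assoc]
  let D : CommaLiftData f g f' g' q r s hf hg n :=
    { t := t, b := b, bb := bsq.lift, c := csq.lift,
      hbb := bsq.fac_left, hcc := csq.fac_left,
      hbr := bsq.fac_right, hcs := csq.fac_right, hsq := sq.w }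
  obtain ⟨α, hα1, hα2⟩ := tf_lift (i := prismIncl n) (u := D.uW) (v := D.alpha') hq
    (fun m z1 z2 hz => Subtype.ext hz) D.uW_comm
  have cond0 : pt (0 : Fin 2) (SSet.stdSimplex.obj (SimplexCategory.mk n)) ≫ α
      = (SSet.yonedaEquiv (X := B) (n := ⦋n⦌)).symm (SSet.yonedaEquiv (X := B) (n := ⦋n⦌) D.bb) ≫ f := by
    have h6 := D.lift_endpoint0 α hα1
    rw [show (SSet.yonedaEquiv (X := B) (n := ⦋n⦌)).symm (SSet.yonedaEquiv (X := B) (n := ⦋n⦌) D.bb) = D.bb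
      from Equiv.symm_apply_apply _ _]
    exact h6
  have cond1 : pt (1 : Fin 2) (SSet.stdSimplex.obj (SimplexCategory.mk n)) ≫ α
      = (SSet.yonedaEquiv (X := C) (n := ⦋n⦌)).symm (SSet.yonedaEquiv (X := C) (n := ⦋n⦌) D.c) ≫ g := by
    have h6 := D.lift_endpoint1 α hα1
    rw [show (SSet.yonedaEquiv (X := C) (n := ⦋n⦌)).symm (SSet.yonedaEquiv (X := C) (n := ⦋n⦌) D.c) = D.c
      from Equiv.symm_apply_apply _ _]
    exact h6
  let yel : (comma f g).obj (op (SimplexCategory.mk n)) :=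
    ⟨((SSet.yonedaEquiv (X := C) (n := ⦋n⦌) D.c, SSet.yonedaEquiv (X := B) (n := ⦋n⦌) D.bb), α), cond0, cond1⟩
  refine ⟨⟨⟨(SSet.yonedaEquiv (X := (comma f g)) (n := ⦋n⦌)).symm yel, ?_, ?_⟩⟩⟩
  · apply NatTrans.ext
    funext m
    apply ConcreteCategory.hom_ext
    intro z
    obtain ⟨x, hx⟩ := z
    show (comma f g).map (x.down).op yel = D.t.app m ⟨x, hx⟩
    apply Subtype.ext
    refine Prod.ext (Prod.ext ?_ ?_) ?_
    · show C.map (x.down).op (SSet.yonedaEquiv (X := C) (n := ⦋n⦌) D.c) = (D.t.app m ⟨x, hx⟩).1.1.1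
      rw [← app_eq_map_yoneda D.c x]
      exact (D.tC x hx).symm
    · show B.map (x.down).op (SSet.yonedaEquiv (X := B) (n := ⦋n⦌) D.bb) = (D.t.app m ⟨x, hx⟩).1.1.2
      rw [← app_eq_map_yoneda D.bb x]
      exact (D.tB x hx).symm
    · show (SSet.stdSimplex.map x.down ▷ Δ[1]) ≫ α = (D.t.app m ⟨x, hx⟩).1.2
      exact D.uW_interior α hα1 x hx
  · apply NatTrans.ext
    funext m
    apply ConcreteCategory.hom_ext
    intro x
    show (commaMap q r s hf hg).app m ((comma f g).map (x.down).op yel) = D.b.app m x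
    apply Subtype.ext
    refine Prod.ext (Prod.ext ?_ ?_) ?_
    · show s.app m (C.map (x.down).op (SSet.yonedaEquiv (X := C) (n := ⦋n⦌) D.c)) = (D.b.app m x).1.1.1
      rw [← app_eq_map_yoneda D.c x]
      exact ConcreteCategory.congr_hom (NatTrans.congr_app D.hcs m) x
    · show r.app m (B.map (x.down).op (SSet.yonedaEquiv (X := B) (n := ⦋n⦌) D.bb)) = (D.b.app m x).1.1.2
      rw [← app_eq_map_yoneda D.bb x]
      exact ConcreteCategory.congr_hom (NatTrans.congr_app D.hbr m) x
    · show ((SSet.stdSimplex.map x.down ▷ Δ[1]) ≫ α) ≫ q = (D.b.app m x).1.2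
      rw [Category.assoc, hα2]
      exact (D.b_alpha x).symm

end QCat
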